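/- arXiv:1108.2808 — 4 statements merged into one kernel-verified Lean document; each statement's English description precedes it below -/
import Mathlib

section
/- For positive integers a_1,…,a_n (n ≥ 2), the chromatic polynomial of the clique-path L(a_1,…,a_n) satisfies P_{L(a_1,…,a_n)}(X) · ∏_{i=2}^{n−1}(X)_{a_i} = ∏_{i=1}^{n−1}(X)_{a_i + a_{i+1}}. -/
open Polynomial

/-- `P` is the chromatic polynomial of `G`: for every natural number `q`, evaluating `P`
at `q` gives the number of proper `q`-colourings of `G`. -/
def IsChromaticPoly {V : Type} (G : SimpleGraph V) (P : Polynomial ℤ) : Prop :=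
  ∀ q : ℕ, P.eval (q : ℤ) = Nat.card (G.Coloring (Fin q))

/-- The falling-factorial polynomial `(Y)_m = Y (Y-1) ⋯ (Y-m+1)`. -/
noncomputable def fallPoly (Y : Polynomial ℤ) (m : ℕ) : Polynomial ℤ :=
  ∏ t ∈ Finset.range m, (Y - C (t : ℤ))

/-- Vertices of the clique-path `L(a_1, …, a_n)`: a vertex of the `i`-th clique. -/
abbrev CliquePathVertex (L : List ℕ) : Type := Σ i : Fin L.length, Fin (L.get i)

/-- One-directional adjacency relation for a clique-path: same clique or next clique. -/
def cliquePathRel (L : List ℕ) : CliquePathVertex L → CliquePathVertex L → Prop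
  | ⟨i, _⟩, ⟨i', _⟩ => i.val = i'.val ∨ i.val + 1 = i'.val

/-- The clique-path `L(a_1,…,a_n)`: a path on `n` vertices whose `i`-th vertex is blown up
into a clique of size `a_i`, with all possible edges between neighbouring cliques. -/
def cliquePathGraph (L : List ℕ) : SimpleGraph (CliquePathVertex L) where
  Adj x y := x ≠ y ∧ (cliquePathRel L x y ∨ cliquePathRel L y x)
  symm := ⟨fun x y h => ⟨h.1.symm, h.2.symm⟩⟩
  loopless := ⟨fun x h => h.1 rfl⟩

namespace CPaux

lemma descFactorial_mul (q b a : ℕ) :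
    q.descFactorial b * (q - b).descFactorial a = q.descFactorial (b + a) := by
  induction a with
  | zero => simp
  | succ a ih =>
    rw [Nat.descFactorial_succ, ← Nat.add_assoc, Nat.descFactorial_succ, ← ih, Nat.sub_sub]
    ring

/-- shifting a vertex of `L(b::rest)` into `L(a::b::rest)`. -/
def shift (a b : ℕ) (rest : List ℕ) :
    CliquePathVertex (b :: rest) → CliquePathVertex (a :: b :: rest) :=
  fun x => ⟨x.1.succ, x.2⟩


lemma ne_of_fst_ne {L : List ℕ} {v w : CliquePathVertex L} (h : v.1.val ≠ w.1.val) : v ≠ w :=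
  fun e => h (congrArg (fun z : CliquePathVertex L => z.1.val) e)

lemma snd_ne_of_ne {L : List ℕ} {i : Fin L.length} {x y : Fin (L.get i)}
    (h : x ≠ y) : (⟨i, x⟩ : CliquePathVertex L) ≠ ⟨i, y⟩ :=
  fun e => h (eq_of_heq (Sigma.mk.inj_iff.mp e).2)

lemma shift_injective (a b : ℕ) (rest : List ℕ) : Function.Injective (shift a b rest) := by
  rintro ⟨⟨i, hi⟩, x⟩ ⟨⟨j, hj⟩, y⟩ h
  simp only [shift, Fin.succ_mk, Sigma.mk.inj_iff, Fin.mk.injEq] at h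
  obtain ⟨h1, h2⟩ := h
  have hij : i = j := by omega
  subst hij
  exact Sigma.ext rfl h2

lemma adj_shift_iff (a b : ℕ) (rest : List ℕ) (v w : CliquePathVertex (b :: rest)) :
    (cliquePathGraph (a :: b :: rest)).Adj (shift a b rest v) (shift a b rest w) ↔
      (cliquePathGraph (b :: rest)).Adj v w := by
  rcases v with ⟨⟨i, hi⟩, x⟩
  rcases w with ⟨⟨j, hj⟩, y⟩
  constructor
  · rintro ⟨h1, h2⟩
    refine ⟨fun h3 => h1 (congrArg (shift a b rest) h3), ?_⟩
    simp only [shift, Fin.succ_mk, cliquePathRel] at h2 ⊢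
    omega
  · rintro ⟨h1, h2⟩
    refine ⟨fun h3 => h1 (shift_injective a b rest h3), ?_⟩
    simp only [shift, Fin.succ_mk, cliquePathRel] at h2 ⊢
    omega

/-- restriction of a colouring. -/
def res (q a b : ℕ) (rest : List ℕ)
    (f : (cliquePathGraph (a :: b :: rest)).Coloring (Fin q)) :
    (cliquePathGraph (b :: rest)).Coloring (Fin q) :=
  SimpleGraph.Coloring.mk (fun v => f (shift a b rest v))
    (fun h => f.valid ((adj_shift_iff a b rest _ _).2 h))

def glue (q a b : ℕ) (rest : List ℕ)
    (g : (cliquePathGraph (b :: rest)).Coloring (Fin q)) (e : Fin a → Fin q) :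
    CliquePathVertex (a :: b :: rest) → Fin q
  | ⟨⟨0, _⟩, x⟩ => e x
  | ⟨⟨j+1, h⟩, x⟩ => g ⟨⟨j, Nat.lt_of_succ_lt_succ h⟩, x⟩

/-- colours available for the new clique, given a colouring `g` of the rest. -/
def okColors (q b : ℕ) (rest : List ℕ)
    (g : (cliquePathGraph (b :: rest)).Coloring (Fin q)) : Set (Fin q) :=
  {c | ∀ y : Fin b, g ⟨⟨0, Nat.succ_pos _⟩, y⟩ ≠ c}

lemma g0_injective (q b : ℕ) (rest : List ℕ)
    (g : (cliquePathGraph (b :: rest)).Coloring (Fin q)) :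
    Function.Injective (fun y : Fin b => g ⟨⟨0, Nat.succ_pos _⟩, y⟩) := by
  intro y y' h
  by_contra hne
  exact g.valid (⟨snd_ne_of_ne hne, Or.inl (Or.inl rfl)⟩ :
    (cliquePathGraph (b :: rest)).Adj ⟨⟨0, Nat.succ_pos _⟩, y⟩ ⟨⟨0, Nat.succ_pos _⟩, y'⟩) h

lemma card_okColors (q b : ℕ) (rest : List ℕ)
    (g : (cliquePathGraph (b :: rest)).Coloring (Fin q)) :
    Nat.card (okColors q b rest g) = q - b := by
  classical
  have : okColors q b rest g =
      (Set.range (fun y : Fin b => g ⟨⟨0, Nat.succ_pos _⟩, y⟩))ᶜ := by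
    ext c
    simp [okColors, eq_comm]
  rw [this, Nat.card_eq_fintype_card, Fintype.card_compl_set,
    Set.card_range_of_injective (g0_injective q b rest g)]
  simp

/-- The fibre of restriction over `g` is equivalent to embeddings into the ok colours. -/
noncomputable def fiberEquiv (q a b : ℕ) (rest : List ℕ)
    (g : (cliquePathGraph (b :: rest)).Coloring (Fin q)) :
    {f : (cliquePathGraph (a :: b :: rest)).Coloring (Fin q) // res q a b rest f = g} ≃
      (Fin a ↪ okColors q b rest g) where
  toFun := fun ⟨f, hf⟩ =>
    ⟨fun x => ⟨f ⟨⟨0, Nat.succ_pos _⟩, x⟩, by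
      intro y
      have : g ⟨⟨0, Nat.succ_pos _⟩, y⟩ = f ⟨⟨1, by simp only [List.length_cons]; omega⟩, y⟩ := by rw [← hf]; rfl
      rw [this]
      exact f.valid ⟨ne_of_fst_ne (by simp), Or.inr (Or.inr rfl)⟩⟩,
     by
      intro x x' h
      by_contra hne
      have hadj : (cliquePathGraph (a :: b :: rest)).Adj ⟨⟨0, Nat.succ_pos _⟩, x⟩
          ⟨⟨0, Nat.succ_pos _⟩, x'⟩ := ⟨snd_ne_of_ne hne, Or.inl (Or.inl rfl)⟩
      exact f.valid hadj (congrArg Subtype.val h)⟩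
  invFun := fun e =>
    ⟨SimpleGraph.Coloring.mk (glue q a b rest g (fun x => (e x).1)) (by
      rintro ⟨⟨i, hi⟩, x⟩ ⟨⟨j, hj⟩, y⟩ hadj
      obtain ⟨hne, hrel⟩ := hadj
      match i, hi, x, j, hj, y with
      | 0, hi, x, 0, hj, y =>
        have hxy : x ≠ y := by
          intro h; exact hne (by cases h; rfl)
        show ((e x : _) : Fin q) ≠ (e y : _)
        intro h
        exact hxy (e.injective (Subtype.ext h))
      | 0, hi, x, j+1, hj, y =>
        have hj0 : j = 0 := by
          rcases hrel with (h | h) | (h | h) <;> simp [cliquePathRel] at * <;> omega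
        subst hj0
        show ((e x : _) : Fin q) ≠ g ⟨⟨0, _⟩, y⟩
        exact fun h => (e x).2 y h.symm
      | j+1, hj, y, 0, hi, x =>
        have hj0 : j = 0 := by
          rcases hrel with (h | h) | (h | h) <;> simp [cliquePathRel] at * <;> omega
        subst hj0
        show g ⟨⟨0, _⟩, y⟩ ≠ ((e x : _) : Fin q)
        exact fun h => (e x).2 y h
      | i+1, hi, x, j+1, hj, y =>
        show g ⟨⟨i, _⟩, x⟩ ≠ g ⟨⟨j, _⟩, y⟩
        apply g.valid
        refine ⟨?_, ?_⟩
        · intro h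
          apply hne
          have := congrArg (shift a b rest) h
          simpa [shift] using this
        · rcases hrel with (h | h) | (h | h) <;>
            simp only [cliquePathRel] at * <;>
            first
              | exact Or.inl (Or.inl (by omega))
              | exact Or.inl (Or.inr (by omega))
              | exact Or.inr (Or.inl (by omega))
              | exact Or.inr (Or.inr (by omega))), by
      apply DFunLike.ext
      rintro ⟨⟨i, hi⟩, x⟩
      rfl⟩
  left_inv := fun ⟨f, hf⟩ => by
    apply Subtype.ext
    apply DFunLike.ext
    rintro ⟨⟨i, hi⟩, x⟩
    match i, hi, x with
    | 0, hi, x => rfl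
    | i+1, hi, x =>
      show g ⟨⟨i, _⟩, x⟩ = f ⟨⟨i+1, hi⟩, x⟩
      rw [← hf]
      rfl
  right_inv := fun e => by
    ext x
    rfl

noncomputable instance (L : List ℕ) (q : ℕ) : Fintype ((cliquePathGraph L).Coloring (Fin q)) := by
  classical infer_instance

lemma card_cons (q a b : ℕ) (rest : List ℕ) :
    Nat.card ((cliquePathGraph (a :: b :: rest)).Coloring (Fin q))
      = (q - b).descFactorial a *
        Nat.card ((cliquePathGraph (b :: rest)).Coloring (Fin q)) := by
  classical
  rw [Nat.card_congr (Equiv.sigmaFiberEquiv (res q a b rest)).symm,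
    Nat.card_eq_fintype_card, Fintype.card_sigma]
  have hfib : ∀ g : (cliquePathGraph (b :: rest)).Coloring (Fin q),
      Fintype.card {f // res q a b rest f = g} = (q - b).descFactorial a := by
    intro g
    rw [← Nat.card_eq_fintype_card, Nat.card_congr (fiberEquiv q a b rest g)]
    letI : Fintype (okColors q b rest g) := Fintype.ofFinite _
    rw [Nat.card_eq_fintype_card, Fintype.card_embedding_eq, Fintype.card_fin,
      ← Nat.card_eq_fintype_card, card_okColors]
  simp only [hfib, Finset.sum_const, Finset.card_univ, smul_eq_mul,
    Nat.card_eq_fintype_card, Nat.mul_comm]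

lemma card_single (q b : ℕ) :
    Nat.card ((cliquePathGraph [b]).Coloring (Fin q)) = q.descFactorial b := by
  classical
  have e : (cliquePathGraph [b]).Coloring (Fin q) ≃ (CliquePathVertex [b] ↪ Fin q) :=
    { toFun := fun c => ⟨c, by
        intro v w h
        by_contra hne
        refine c.valid (⟨hne, ?_⟩ : (cliquePathGraph [b]).Adj v w) h
        rcases v with ⟨⟨i, hi⟩, x⟩
        rcases w with ⟨⟨j, hj⟩, y⟩
        simp only [List.length_singleton] at hi hj
        exact Or.inl (Or.inl (show i = j by omega))⟩
      invFun := fun e => SimpleGraph.Coloring.mk e (fun h => e.injective.ne h.1)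
      left_inv := fun c => rfl
      right_inv := fun e => rfl }
  rw [Nat.card_congr e, Nat.card_eq_fintype_card, Fintype.card_embedding_eq, Fintype.card_fin]
  congr 1
  simp [Fintype.card_sigma]

lemma prod_Ico_shift (h : ℕ → ℕ) (x : ℕ) (l : List ℕ) (m : ℕ) :
    ∏ i ∈ Finset.Ico 1 (m+1), h ((x :: l).getD i 0) = ∏ i ∈ Finset.range m, h (l.getD i 0) := by
  rw [Finset.prod_Ico_eq_prod_range]
  simp only [Nat.add_sub_cancel]
  refine Finset.prod_congr rfl fun i _ => ?_
  rw [Nat.add_comm 1 i, List.getD_cons_succ]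

lemma main_nat (q : ℕ) : ∀ (rest : List ℕ) (a b : ℕ),
    Nat.card ((cliquePathGraph (a :: b :: rest)).Coloring (Fin q)) *
      ∏ i ∈ Finset.Ico 1 ((a :: b :: rest).length - 1),
        q.descFactorial ((a :: b :: rest).getD i 0)
    = ∏ i ∈ Finset.range ((a :: b :: rest).length - 1),
        q.descFactorial ((a :: b :: rest).getD i 0 + (a :: b :: rest).getD (i+1) 0) := by
  intro rest
  induction rest with
  | nil =>
    intro a b
    simp only [List.length, Nat.add_sub_cancel]
    rw [card_cons, card_single]
    simp [descFactorial_mul, Nat.mul_comm, Nat.add_comm]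
  | cons c rest' ih =>
    intro a b
    have key := card_cons q a b (c :: rest')
    have IH := ih b c
    simp only [List.length_cons, Nat.add_sub_cancel] at IH ⊢
    rw [key]
    rw [show rest'.length + 1 + 1 = (rest'.length + 1) + 1 from rfl,
      prod_Ico_shift (fun m => q.descFactorial m) a (b :: c :: rest') (rest'.length + 1),
      Finset.prod_range_succ' (fun i => q.descFactorial ((b :: c :: rest').getD i 0)) rest'.length,
      Finset.prod_range_succ'
        (fun i => q.descFactorial ((a :: b :: c :: rest').getD i 0 +
          (a :: b :: c :: rest').getD (i+1) 0)) (rest'.length + 1)]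
    rw [prod_Ico_shift (fun m => q.descFactorial m) b (c :: rest') rest'.length] at IH
    simp only [List.getD_cons_succ, List.getD_cons_zero] at IH ⊢
    have hd : q.descFactorial b * (q-b).descFactorial a = q.descFactorial (a+b) := by
      rw [descFactorial_mul, Nat.add_comm]
    rw [← IH, ← hd]
    ring


lemma fall_eval (q m : ℕ) : (fallPoly X m).eval (q : ℤ) = (q.descFactorial m : ℤ) := by
  induction m with
  | zero => simp [fallPoly]
  | succ m ih =>
    rw [fallPoly, Finset.prod_range_succ, eval_mul,
      show (∏ t ∈ Finset.range m, (X - C (t:ℤ))) = fallPoly X m from rfl, ih,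
      Nat.descFactorial_succ]
    rcases le_or_gt m q with h | h
    · have hc : ((q - m : ℕ) : ℤ) = (q:ℤ) - m := by
        push_cast [h]; ring
      simp only [eval_sub, eval_X, eval_C, Nat.cast_mul, hc]
      ring
    · have h1 : q.descFactorial m = 0 := Nat.descFactorial_eq_zero_iff_lt.mpr h
      simp [h1]

end CPaux

/-- The chromatic polynomial of the clique-path `L(a_1,…,a_n)` satisfies
`P · ∏_{i=2}^{n-1} (X)_{a_i} = ∏_{i=1}^{n-1} (X)_{a_i + a_{i+1}}` (here `L.getD i 0` is
`a_{i+1}` in 0-based indexing). -/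
theorem chromatic_poly_of_clique_path
    (L : List ℕ) (hlen : 2 ≤ L.length) (hpos : ∀ a ∈ L, 0 < a)
    (P : Polynomial ℤ) (hP : IsChromaticPoly (cliquePathGraph L) P) :
    P * ∏ i ∈ Finset.Ico 1 (L.length - 1), fallPoly X (L.getD i 0)
      = ∏ i ∈ Finset.range (L.length - 1), fallPoly X (L.getD i 0 + L.getD (i + 1) 0) := by
  rcases L with _ | ⟨a, _ | ⟨b, rest⟩⟩
  · simp at hlen
  · simp at hlen
  have key : ∀ q : ℕ,
      (P * ∏ i ∈ Finset.Ico 1 ((a :: b :: rest).length - 1),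
        fallPoly X ((a :: b :: rest).getD i 0)).eval (q : ℤ)
      = (∏ i ∈ Finset.range ((a :: b :: rest).length - 1),
          fallPoly X ((a :: b :: rest).getD i 0 + (a :: b :: rest).getD (i+1) 0)).eval (q : ℤ) := by
    intro q
    simp only [eval_mul, eval_prod, CPaux.fall_eval, hP q]
    exact_mod_cast CPaux.main_nat q rest a b
  have h0 : P * (∏ i ∈ Finset.Ico 1 ((a :: b :: rest).length - 1),
        fallPoly X ((a :: b :: rest).getD i 0))
      - ∏ i ∈ Finset.range ((a :: b :: rest).length - 1),
          fallPoly X ((a :: b :: rest).getD i 0 + (a :: b :: rest).getD (i+1) 0) = 0 := by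
    apply Polynomial.eq_zero_of_infinite_isRoot
    apply Set.infinite_of_injective_forall_mem (f := fun q : ℕ => (q : ℤ))
      Nat.cast_injective
    intro q
    simp only [Set.mem_setOf_eq, IsRoot, eval_sub, sub_eq_zero]
    exact key q
  exact sub_eq_zero.mp h0
end

section
/- Let n ≥ 2, let S_1,…,S_n be nonempty ordered tuples of positive integers with S_i = (a_{i(1)},…,a_{i(m_i)}), and let k be a positive integer. Then the chromatic polynomial of the clique-theta graph T(1,S_1,…,S_n,k) equals the product of [(X)_{a_{n(m_n)}+k} · ∏_{i=1}^{n−1}(X−k−1)_{a_{i(m_i)}−1} · ∏_{i=1}^{n} ∏_{l=1}^{m_i−1}(X−a_{i(l+1)}−1)_{a_{i(l)}−1}] with [k·(X−k)^{n−1}·∏_{i=1}^{n} r(1,a_{i(1)},…,a_{i(m_i)};X) + ∏_{i=1}^{n} r(1,a_{i(1)},…,a_{i(m_i)},k;X)]. -/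
open Polynomial
open Finset

/-- `∏ (X - a)` over a list of naturals. -/
noncomputable def prodL (L : List ℕ) : Polynomial ℤ := (L.map fun a => X - C (a : ℤ)).prod

/-- `∏ (-a)` over a list of naturals. -/
def negProd (L : List ℕ) : ℤ := (L.map fun a => (-(a : ℤ))).prod

/-- Vertices of the clique-theta graph `T(j, S_1, …, S_n, k)`: a vertex of the initial
`j`-clique, a vertex of the `l`-th internal clique of the `i`-th clique-path, or a vertex
of the terminal `k`-clique. -/
abbrev CliqueThetaVertex (j : ℕ) {n : ℕ} (S : Fin n → List ℕ) (k : ℕ) : Type :=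
  Fin j ⊕ ((Σ i : Fin n, Σ l : Fin (S i).length, Fin ((S i).get l)) ⊕ Fin k)

/-- One-directional adjacency relation for a clique-theta graph: same clique, or
consecutive cliques along one of the clique-paths. -/
def cliqueThetaRel (j : ℕ) {n : ℕ} (S : Fin n → List ℕ) (k : ℕ) :
    CliqueThetaVertex j S k → CliqueThetaVertex j S k → Prop
  | Sum.inl _, Sum.inl _ => True
  | Sum.inl _, Sum.inr (Sum.inl ⟨_, l, _⟩) => l.val = 0
  | Sum.inr (Sum.inl ⟨i, l, _⟩), Sum.inr (Sum.inr _) => l.val + 1 = (S i).length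
  | Sum.inr (Sum.inr _), Sum.inr (Sum.inr _) => True
  | Sum.inr (Sum.inl ⟨i, l, _⟩), Sum.inr (Sum.inl ⟨i', l', _⟩) =>
      i.val = i'.val ∧ (l.val = l'.val ∨ l.val + 1 = l'.val)
  | _, _ => False

/-- The clique-theta graph `T(j, S_1, …, S_n, k)`, obtained from the clique-paths
`L(j, S_i, k)`, `1 ≤ i ≤ n`, by identifying their initial `j`-cliques into a single
`j`-clique and their terminal `k`-cliques into a single `k`-clique. -/
def cliqueThetaGraph (j : ℕ) {n : ℕ} (S : Fin n → List ℕ) (k : ℕ) :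
    SimpleGraph (CliqueThetaVertex j S k) where
  Adj x y := x ≠ y ∧ (cliqueThetaRel j S k x y ∨ cliqueThetaRel j S k y x)
  symm := ⟨fun x y h => ⟨h.1.symm, h.2.symm⟩⟩
  loopless := ⟨fun x h => h.1 rfl⟩

lemma cliqueThetaGraph_adj_iff {j n : ℕ} {S : Fin n → List ℕ} {k : ℕ}
    {x y : CliqueThetaVertex j S k} :
    (cliqueThetaGraph j S k).Adj x y ↔
      x ≠ y ∧ (cliqueThetaRel j S k x y ∨ cliqueThetaRel j S k y x) := Iff.rfl


lemma ncard_sigma {ι : Type*} [Fintype ι] (f : ι → Type*) [∀ i, Finite (f i)] :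
    Nat.card (Σ i, f i) = ∑ i, Nat.card (f i) := by
  classical
  letI : ∀ i, Fintype (f i) := fun i => Fintype.ofFinite _
  simp [Nat.card_eq_fintype_card, Fintype.card_sigma]

/-- integer falling factorial -/
def fallZ (x : ℤ) (t : ℕ) : ℤ := ∏ j ∈ range t, (x - j)

lemma fallZ_succ (x : ℤ) (t : ℕ) : fallZ x (t+1) = fallZ x t * (x - t) := by
  simp [fallZ, prod_range_succ]

lemma fallZ_succ' (x : ℤ) (t : ℕ) : fallZ x (t+1) = x * fallZ (x-1) t := by
  rw [fallZ, prod_range_succ']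
  simp only [Nat.cast_zero, sub_zero]
  rw [mul_comm]
  congr 1
  apply prod_congr rfl; intro j _; push_cast; ring

lemma fallZ_add (x : ℤ) (t u : ℕ) : fallZ x (t + u) = fallZ x t * fallZ (x - t) u := by
  rw [fallZ, fallZ, fallZ, prod_range_add]
  congr 1
  apply prod_congr rfl; intro j _; push_cast; ring

lemma cast_descFactorial (n t : ℕ) (h : t ≤ n) :
    ((n.descFactorial t : ℤ)) = fallZ (n : ℤ) t := by
  rw [Nat.descFactorial_eq_prod_range, fallZ, Nat.cast_prod]
  apply prod_congr rfl
  intro j hj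
  simp only [mem_range] at hj
  have : j ≤ n := le_trans (le_of_lt hj) h
  push_cast [Nat.cast_sub this]
  ring

lemma descFactorial_mono (a b t : ℕ) (h : a ≤ b) : a.descFactorial t ≤ b.descFactorial t := by
  induction t with
  | zero => simp
  | succ t ih =>
      rw [Nat.descFactorial_succ, Nat.descFactorial_succ]
      exact Nat.mul_le_mul (by omega) ih

lemma descFactorial_diff (n t : ℕ) (hn : 1 ≤ n) :
    ((n.descFactorial t - (n-1).descFactorial t : ℕ) : ℤ)
      = (n.descFactorial t : ℤ) - ((n-1).descFactorial t : ℤ) := by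
  have : (n-1).descFactorial t ≤ n.descFactorial t := descFactorial_mono _ _ _ (by omega)
  push_cast [Nat.cast_sub this]; ring

lemma list_getD_sum (l : List ℕ) : ∑ j ∈ range l.length, l.getD j 0 = l.sum := by
  induction l with
  | nil => simp
  | cons a t ih =>
      rw [List.length_cons, Finset.sum_range_succ']
      simp only [List.getD_cons_succ, List.getD_cons_zero, List.sum_cons]
      omega

lemma list_getD_prod (l : List ℕ) (F : ℕ → ℤ) :
    ∏ j ∈ range l.length, F (l.getD j 0) = (l.map fun a => F a).prod := by
  induction l with
  | nil => simp
  | cons a t ih =>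
      rw [List.length_cons, Finset.prod_range_succ']
      simp only [List.getD_cons_succ, List.getD_cons_zero, List.map_cons, List.prod_cons]
      rw [ih, mul_comm]

lemma getLastD_eq_getD (l : List ℕ) (h : l ≠ []) : l.getLastD 0 = l.getD (l.length - 1) 0 := by
  rw [List.getLastD_eq_getLast?, List.getLast?_eq_getLast h, List.getD_eq_getElem _ _ (by
    cases l with | nil => simp at h | cons a t => simp),
    List.getLast_eq_getElem]
  simp


lemma card_inj_avoid (q a : ℕ) (W : Finset (Fin q)) :
    Nat.card {f : Fin a → Fin q // Function.Injective f ∧ ∀ v, f v ∉ W}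
      = (q - W.card).descFactorial a := by
  classical
  have e : {f : Fin a → Fin q // Function.Injective f ∧ ∀ v, f v ∉ W}
      ≃ (Fin a ↪ {x : Fin q // x ∉ W}) := by
    refine ⟨fun f => ⟨fun v => ⟨f.1 v, f.2.2 v⟩, fun v w h => f.2.1 (congrArg Subtype.val h)⟩,
      fun g => ⟨fun v => (g v).1, fun v w h => g.injective (Subtype.ext h), fun v => (g v).2⟩,
      fun f => rfl, fun g => by ext v : 2; rfl⟩
  rw [Nat.card_congr e, Nat.card_eq_fintype_card, Fintype.card_embedding_eq,
    Fintype.card_fin]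
  congr 1
  rw [Fintype.card_subtype_compl]
  simp [Fintype.card_subtype, Finset.filter_mem_eq_inter]

lemma card_inj_avoid_and_notmem (q a : ℕ) (W : Finset (Fin q)) (c : Fin q) (hc : c ∉ W) :
    Nat.card {f : Fin a → Fin q // (Function.Injective f ∧ ∀ v, f v ∉ W) ∧ c ∉ Finset.univ.image f}
      = (q - W.card - 1).descFactorial a := by
  classical
  have e : {f : Fin a → Fin q // (Function.Injective f ∧ ∀ v, f v ∉ W) ∧ c ∉ Finset.univ.image f}
      ≃ {f : Fin a → Fin q // Function.Injective f ∧ ∀ v, f v ∉ insert c W} :=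
    Equiv.subtypeEquivRight (by
      intro f
      simp only [Finset.mem_image, Finset.mem_univ, true_and, not_exists, Finset.mem_insert,
        not_or]
      constructor
      · rintro ⟨⟨hi, hW⟩, hcim⟩
        exact ⟨hi, fun v => ⟨fun h => hcim v h, hW v⟩⟩
      · rintro ⟨hi, h⟩
        exact ⟨⟨hi, fun v => (h v).2⟩, fun v hv => (h v).1 hv⟩)
  rw [Nat.card_congr e, card_inj_avoid, Finset.card_insert_of_notMem hc]
  congr 1

lemma sum_ite_card {T : Type*} [Fintype T] (p : T → Prop) [DecidablePred p] (A B : ℕ) :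
    ∑ x : T, (if p x then A else B)
      = (Nat.card T - Nat.card {x // ¬ p x}) * A + Nat.card {x // ¬ p x} * B := by
  classical
  rw [Finset.sum_ite, Finset.sum_const, Finset.sum_const, smul_eq_mul, smul_eq_mul]
  have h2 : (univ.filter (fun x => ¬ p x)).card = Nat.card {x // ¬ p x} := by
    rw [Nat.card_eq_fintype_card, Fintype.card_subtype]
  have h1 : (univ.filter p).card = Nat.card T - Nat.card {x // ¬ p x} := by
    have := Finset.card_filter_add_card_filter_not (s := univ) p
    rw [Nat.card_eq_fintype_card (α := T)]
    simp only [Finset.card_univ] at this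
    omega
  rw [h1, h2]

lemma card_subtype_subtype {α : Type*} (p q : α → Prop) :
    Nat.card {x : {y // p y} // q x.1} = Nat.card {x // p x ∧ q x} :=
  Nat.card_congr (Equiv.subtypeSubtypeEquivSubtypeInter p q)

def GH (q : ℕ) (a : ℕ → ℕ) : ℕ → ℕ → ℕ × ℕ
  | 0, s => ((q - s - 1).descFactorial (a 0), (q - s).descFactorial (a 0))
  | (m+1), s =>
      ((q - s - 1).descFactorial (a (m+1)) * (GH q a m (a (m+1))).1
        + ((q - s).descFactorial (a (m+1)) - (q - s - 1).descFactorial (a (m+1)))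
            * (GH q a m (a (m+1))).2,
       (q - s).descFactorial (a (m+1)) * (GH q a m (a (m+1))).1)

lemma GH_closed (q : ℕ) (a : ℕ → ℕ) (m : ℕ) :
    ∀ (s : ℕ), (∀ i, i ≤ m → 1 ≤ a i) → (∑ i ∈ range (m+1), a i) + s + 1 ≤ q →
    ((q:ℤ) * ((GH q a m s).1 : ℤ) =
        (∏ l ∈ range m, fallZ ((q:ℤ) - (a (l+1)) - 1) (a l - 1))
          * fallZ ((q:ℤ) - s - 1) (a m - 1)
          * ((∏ i ∈ range (m+1), ((q:ℤ) - a i)) * ((q:ℤ) - s)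
              - (∏ i ∈ range (m+1), (-(a i:ℤ))) * (-(s:ℤ))))
    ∧ ((q:ℤ) * ((GH q a m s).2 : ℤ) =
        (∏ l ∈ range m, fallZ ((q:ℤ) - (a (l+1)) - 1) (a l - 1))
          * fallZ ((q:ℤ) - s - 1) (a m - 1) * ((q:ℤ) - s)
          * ((∏ i ∈ range (m+1), ((q:ℤ) - a i)) - (∏ i ∈ range (m+1), (-(a i:ℤ))))) := by
  induction m with
  | zero =>
      intro s ha hq
      simp only [zero_add, Finset.sum_range_one] at hq
      obtain ⟨t, ht⟩ : ∃ t, a 0 = t + 1 := ⟨a 0 - 1, by have := ha 0 (le_refl 0); omega⟩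
      have hc1 : ((q - s - 1 : ℕ) : ℤ) = (q:ℤ) - s - 1 := by omega
      have hc2 : ((q - s : ℕ) : ℤ) = (q:ℤ) - s := by omega
      have hGH0 : GH q a 0 s = ((q - s - 1).descFactorial (a 0), (q - s).descFactorial (a 0)) := rfl
      constructor
      · rw [hGH0]
        rw [cast_descFactorial _ _ (by omega), hc1, ht]
        simp only [zero_add, Nat.add_sub_cancel, Finset.prod_range_one, Finset.prod_range_zero,
          one_mul, fallZ_succ]
        push_cast [ht]
        ring
      · rw [hGH0]
        simp only [zero_add, Finset.prod_range_one, Finset.prod_range_zero, one_mul]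
        rw [cast_descFactorial _ _ (by omega), hc2, ht]
        simp only [Nat.add_sub_cancel, fallZ_succ']
        (try push_cast [ht]); try ring
  | succ m ih =>
      intro s ha hq
      have hsum : ∑ i ∈ range (m+1+1), a i = (∑ i ∈ range (m+1), a i) + a (m+1) :=
        Finset.sum_range_succ a (m+1)
      have hA1 : 1 ≤ a (m+1) := ha (m+1) (le_refl _)
      have hAle : a (m+1) + s + 1 ≤ q := by
        have h1 : a (m+1) ≤ ∑ i ∈ range (m+2), a i := by
          rw [hsum]; omega
        omega
      obtain ⟨g', h'⟩ := ih (a (m+1)) (fun i hi => ha i (by omega)) (by omega)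
      obtain ⟨t, ht⟩ : ∃ t, a (m+1) = t + 1 := ⟨a (m+1) - 1, by omega⟩
      have hc1 : ((q - s - 1 : ℕ) : ℤ) = (q:ℤ) - s - 1 := by omega
      have hc2 : ((q - s : ℕ) : ℤ) = (q:ℤ) - s := by omega
      have hd1 : ((q - s - 1).descFactorial (a (m+1)) : ℤ)
          = fallZ ((q:ℤ) - s - 1) (a (m+1) - 1) * ((q:ℤ) - s - a (m+1)) := by
        rw [cast_descFactorial _ _ (by omega), hc1, ht]
        simp only [Nat.add_sub_cancel, fallZ_succ]
        (try push_cast [ht]); try ring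
      have hd2 : ((q - s).descFactorial (a (m+1)) : ℤ)
          = ((q:ℤ) - s) * fallZ ((q:ℤ) - s - 1) (a (m+1) - 1) := by
        rw [cast_descFactorial _ _ (by omega), hc2, ht]
        simp only [Nat.add_sub_cancel, fallZ_succ']
        (try push_cast [ht]); try ring
      have hdm : (q - s - 1).descFactorial (a (m+1)) ≤ (q - s).descFactorial (a (m+1)) :=
        descFactorial_mono _ _ _ (by omega)
      have hdiff : (((q - s).descFactorial (a (m+1)) - (q - s - 1).descFactorial (a (m+1)) : ℕ) : ℤ)
          = (a (m+1) : ℤ) * fallZ ((q:ℤ) - s - 1) (a (m+1) - 1) := by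
        rw [Nat.cast_sub hdm, hd1, hd2]; ring
      have hP : (∏ i ∈ range (m+2), ((q:ℤ) - a i))
          = (∏ i ∈ range (m+1), ((q:ℤ) - a i)) * ((q:ℤ) - a (m+1)) := by
        rw [Finset.prod_range_succ]
      have hN : (∏ i ∈ range (m+2), (-(a i:ℤ)))
          = (∏ i ∈ range (m+1), (-(a i:ℤ))) * (-(a (m+1):ℤ)) := by
        rw [Finset.prod_range_succ]
      have hF : (∏ l ∈ range (m+1), fallZ ((q:ℤ) - (a (l+1)) - 1) (a l - 1))
          = (∏ l ∈ range m, fallZ ((q:ℤ) - (a (l+1)) - 1) (a l - 1))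
              * fallZ ((q:ℤ) - (a (m+1)) - 1) (a m - 1) := by
        rw [Finset.prod_range_succ]
      have hGHs : GH q a (m+1) s =
          ((q - s - 1).descFactorial (a (m+1)) * (GH q a m (a (m+1))).1
            + ((q - s).descFactorial (a (m+1)) - (q - s - 1).descFactorial (a (m+1)))
                * (GH q a m (a (m+1))).2,
           (q - s).descFactorial (a (m+1)) * (GH q a m (a (m+1))).1) := rfl
      constructor
      · rw [hGHs]
        show (q:ℤ) * (((q - s - 1).descFactorial (a (m+1)) * (GH q a m (a (m+1))).1
            + ((q - s).descFactorial (a (m+1)) - (q - s - 1).descFactorial (a (m+1)))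
                * (GH q a m (a (m+1))).2 : ℕ) : ℤ) = _
        push_cast [Nat.cast_sub hdm]
        rw [hP, hN, hF]
        have expand : (q:ℤ) * ((((q - s - 1).descFactorial (a (m+1)) : ℕ) : ℤ)
              * ((GH q a m (a (m+1))).1 : ℤ)
            + ((((q-s).descFactorial (a (m+1)) : ℕ) : ℤ) - (((q-s-1).descFactorial (a (m+1)) : ℕ) : ℤ))
              * ((GH q a m (a (m+1))).2 : ℤ))
            = (((q - s - 1).descFactorial (a (m+1)) : ℕ) : ℤ) * ((q:ℤ) * ((GH q a m (a (m+1))).1 : ℤ))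
            + ((((q-s).descFactorial (a (m+1)) : ℕ) : ℤ) - (((q-s-1).descFactorial (a (m+1)) : ℕ) : ℤ))
              * ((q:ℤ) * ((GH q a m (a (m+1))).2 : ℤ)) := by ring
        rw [expand, g', h', hd1, hd2]
        ring
      · rw [hGHs]
        show (q:ℤ) * (((q - s).descFactorial (a (m+1)) * (GH q a m (a (m+1))).1 : ℕ) : ℤ) = _
        push_cast
        rw [hP, hN, hF]
        have expand : (q:ℤ) * ((((q - s).descFactorial (a (m+1)) : ℕ) : ℤ)
              * ((GH q a m (a (m+1))).1 : ℤ))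
            = (((q - s).descFactorial (a (m+1)) : ℕ) : ℤ) * ((q:ℤ) * ((GH q a m (a (m+1))).1 : ℤ)) := by
          ring
        rw [expand, g', hd2]
        ring
  
/-- vertices of a clique-path with cliques of sizes `a 0, …, a m`. -/
def PathV (m : ℕ) (a : ℕ → ℕ) : Type := Σ l : Fin (m+1), Fin (a l.1)

instance (m : ℕ) (a : ℕ → ℕ) : Finite (PathV m a) := by unfold PathV; infer_instance

/-- `f` is a proper colouring of the clique-path whose first clique avoids `c` and whose
last clique avoids `U`. -/
def Good (q m : ℕ) (a : ℕ → ℕ) (c : Fin q) (U : Finset (Fin q)) (f : PathV m a → Fin q) : Prop :=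
  (∀ x y : PathV m a, x ≠ y → (x.1.1 = y.1.1 ∨ x.1.1 + 1 = y.1.1) → f x ≠ f y)
  ∧ (∀ v : Fin (a 0), f ⟨⟨0, Nat.succ_pos m⟩, v⟩ ≠ c)
  ∧ (∀ v : Fin (a m), f ⟨⟨m, Nat.lt_succ_self m⟩, v⟩ ∉ U)

def prodSubtypeEquivSigma {A B : Type*} (P : A → Prop) (Q : A → B → Prop) :
    {p : A × B // P p.1 ∧ Q p.1 p.2} ≃ Σ x : {x // P x}, {b // Q x.1 b} :=
  ⟨fun p => ⟨⟨p.1.1, p.2.1⟩, ⟨p.1.2, p.2.2⟩⟩, fun x => ⟨(x.1.1, x.2.1), x.1.2, x.2.2⟩,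
   fun p => rfl, fun x => rfl⟩

noncomputable def pathCount (q m : ℕ) (a : ℕ → ℕ) (c : Fin q) (U : Finset (Fin q)) : ℕ :=
  Nat.card {f : PathV m a → Fin q // Good q m a c U f}

theorem pathCount_eq (q : ℕ) (a : ℕ → ℕ) (c : Fin q) :
    ∀ (m : ℕ) (U : Finset (Fin q)),
      pathCount q m a c U = if c ∈ U then (GH q a m U.card).2 else (GH q a m U.card).1 := by
  intro m
  induction m with
  | zero =>
      intro U
      classical
      have e : {f : PathV 0 a → Fin q // Good q 0 a c U f}
          ≃ {g : Fin (a 0) → Fin q //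
              Function.Injective g ∧ (∀ v, g v ≠ c) ∧ (∀ v, g v ∉ U)} := by
        refine ⟨fun f => ⟨fun v => f.1 ⟨⟨0, Nat.one_pos⟩, v⟩, ?_, fun v => f.2.2.1 v,
            fun v => f.2.2.2 v⟩,
          fun g => ⟨fun x => g.1 ⟨x.2.1, by
              have h0 : x.1.1 = 0 := by omega
              exact lt_of_lt_of_eq x.2.2 (congrArg a h0)⟩, ?_, ?_, ?_⟩, ?_, ?_⟩
        · intro v w h
          by_contra hne
          exact f.2.1 ⟨⟨0, Nat.one_pos⟩, v⟩ ⟨⟨0, Nat.one_pos⟩, w⟩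
            (fun hEq => hne (eq_of_heq (Sigma.mk.inj_iff.mp hEq).2)) (Or.inl rfl) h
        · -- properness
          rintro ⟨⟨lx, hlx⟩, vx⟩ ⟨⟨ly, hly⟩, vy⟩ hne hrel
          obtain rfl : lx = 0 := by omega
          obtain rfl : ly = 0 := by omega
          intro hval
          have hv : vx.1 = vy.1 := congrArg Fin.val (g.2.1 hval)
          obtain rfl : vx = vy := Fin.ext hv
          exact hne rfl
        · intro v; exact g.2.2.1 _
        · intro v; exact g.2.2.2 _
        · intro f
          apply Subtype.ext
          funext x
          rcases x with ⟨⟨lx, hlx⟩, vx⟩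
          obtain rfl : lx = 0 := by omega
          rfl
        · intro g
          apply Subtype.ext
          funext v
          rfl
      rw [pathCount, Nat.card_congr e]
      by_cases hc : c ∈ U
      · rw [if_pos hc]
        have e2 : {g : Fin (a 0) → Fin q //
              Function.Injective g ∧ (∀ v, g v ≠ c) ∧ (∀ v, g v ∉ U)}
            ≃ {g : Fin (a 0) → Fin q // Function.Injective g ∧ ∀ v, g v ∉ U} :=
          Equiv.subtypeEquivRight (fun g => by
            constructor
            · rintro ⟨h1, _, h3⟩; exact ⟨h1, h3⟩
            · rintro ⟨h1, h3⟩
              exact ⟨h1, fun v hv => h3 v (hv ▸ hc), h3⟩)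
        rw [Nat.card_congr e2, card_inj_avoid]
        rfl
      · rw [if_neg hc]
        have e2 : {g : Fin (a 0) → Fin q //
              Function.Injective g ∧ (∀ v, g v ≠ c) ∧ (∀ v, g v ∉ U)}
            ≃ {g : Fin (a 0) → Fin q // Function.Injective g ∧ ∀ v, g v ∉ insert c U} :=
          Equiv.subtypeEquivRight (fun g => by
            simp only [Finset.mem_insert, not_or]
            constructor
            · rintro ⟨h1, h2, h3⟩; exact ⟨h1, fun v => ⟨h2 v, h3 v⟩⟩
            · rintro ⟨h1, h⟩; exact ⟨h1, fun v => (h v).1, fun v => (h v).2⟩)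
        rw [Nat.card_congr e2, card_inj_avoid, Finset.card_insert_of_notMem hc]
        rfl
  | succ m ih =>
      intro U
      classical
      have e : {f : PathV (m+1) a → Fin q // Good q (m+1) a c U f}
          ≃ {p : (Fin (a (m+1)) → Fin q) × (PathV m a → Fin q) //
              (Function.Injective p.1 ∧ ∀ v, p.1 v ∉ U)
               ∧ Good q m a c (Finset.univ.image p.1) p.2} := by
        refine ⟨fun f => ⟨(fun v => f.1 ⟨⟨m+1, Nat.lt_succ_self _⟩, v⟩,
                            fun x => f.1 ⟨⟨x.1.1, by omega⟩, x.2⟩), ⟨⟨?_, ?_⟩, ?_, ?_, ?_⟩⟩,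
          fun p => ⟨fun x => if h : x.1.1 < m+1 then p.1.2 ⟨⟨x.1.1, h⟩, x.2⟩
                    else p.1.1 ⟨x.2.1,
                      lt_of_lt_of_eq x.2.2 (congrArg a (by omega : x.1.1 = m+1))⟩,
                    ?_, ?_, ?_⟩, ?_, ?_⟩
        · -- injectivity of the last-clique colouring
          intro v w h
          by_contra hne
          exact f.2.1 ⟨⟨m+1, Nat.lt_succ_self _⟩, v⟩ ⟨⟨m+1, Nat.lt_succ_self _⟩, w⟩
            (fun hEq => hne (eq_of_heq (Sigma.mk.inj_iff.mp hEq).2)) (Or.inl rfl) h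
        · -- last clique avoids U
          exact fun v => f.2.2.2 v
        · -- properness of the restriction
          rintro ⟨⟨lx, hlx⟩, vx⟩ ⟨⟨ly, hly⟩, vy⟩ hne hrel
          apply f.2.1
          · intro hEq
            have hl : lx = ly := congrArg (fun z => z.1.1) hEq
            subst hl
            obtain rfl : vx = vy := eq_of_heq (Sigma.mk.inj_iff.mp hEq).2
            exact hne rfl
          · exact hrel
        · -- first clique avoids c
          exact fun v => f.2.2.1 v
        · -- level-m clique avoids image of last clique
          intro v hmem
          obtain ⟨w, -, hw⟩ := Finset.mem_image.mp hmem
          refine f.2.1 ⟨⟨m, by omega⟩, v⟩ ⟨⟨m+1, Nat.lt_succ_self _⟩, w⟩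
            (fun hEq => by
              have hval : (m : ℕ) = m+1 := congrArg (fun z => z.1.1) hEq
              omega)
            (Or.inr rfl) hw.symm
        · -- properness of the assembled colouring
          rintro ⟨⟨lx, hlx⟩, vx⟩ ⟨⟨ly, hly⟩, vy⟩ hne hrel
          simp only at hrel
          by_cases hx : lx < m+1 <;> by_cases hy : ly < m+1
          · simp only [dif_pos hx, dif_pos hy]
            apply p.2.2.1
            · intro hEq
              have hl : lx = ly := congrArg (fun z => z.1.1) hEq
              subst hl
              obtain rfl : vx = vy := eq_of_heq (Sigma.mk.inj_iff.mp hEq).2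
              exact hne rfl
            · exact hrel
          · obtain rfl : lx = m := by omega
            simp only [dif_pos hx, dif_neg hy]
            intro hEqv
            refine p.2.2.2.2 vx ?_
            rw [hEqv]
            exact Finset.mem_image_of_mem p.1.1 (Finset.mem_univ _)
          · exact absurd hrel (by omega)
          · obtain rfl : lx = m+1 := by omega
            obtain rfl : ly = m+1 := by omega
            simp only [dif_neg hx, dif_neg hy]
            intro hEqv
            have hv : vx.1 = vy.1 := congrArg Fin.val (p.2.1.1 hEqv)
            obtain rfl : vx = vy := Fin.ext hv
            exact hne rfl
        · -- first clique avoids c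
          intro v
          simp only [dif_pos (show (0:ℕ) < m+1 by omega)]
          exact p.2.2.2.1 v
        · -- last clique avoids U
          intro v
          simp only [dif_neg (Nat.lt_irrefl (m+1))]
          exact p.2.1.2 _
        · -- left inverse
          intro f
          apply Subtype.ext
          funext x
          rcases x with ⟨⟨lx, hlx⟩, vx⟩
          by_cases h : lx < m+1
          · simp only [dif_pos h]
          · obtain rfl : lx = m+1 := by omega
            simp only [dif_neg h]
        · -- right inverse
          intro p
          apply Subtype.ext
          refine Prod.ext ?_ ?_
          · funext v
            simp only [dif_neg (Nat.lt_irrefl (m+1))]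
          · funext x
            simp only [dif_pos x.1.2]
            rfl
      rw [pathCount, Nat.card_congr e,
        Nat.card_congr (prodSubtypeEquivSigma
          (fun b => Function.Injective b ∧ ∀ v, b v ∉ U)
          (fun b g => Good q m a c (Finset.univ.image b) g))]
      letI : Fintype {b : Fin (a (m+1)) → Fin q // Function.Injective b ∧ ∀ v, b v ∉ U} :=
        Fintype.ofFinite _
      rw [ncard_sigma]
      have hsum : ∀ β : {b : Fin (a (m+1)) → Fin q // Function.Injective b ∧ ∀ v, b v ∉ U},
          Nat.card {g : PathV m a → Fin q // Good q m a c (Finset.univ.image β.1) g}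
            = if c ∈ Finset.univ.image β.1 then (GH q a m (a (m+1))).2
              else (GH q a m (a (m+1))).1 := by
        intro β
        have hcard : (Finset.univ.image β.1).card = a (m+1) := by
          rw [Finset.card_image_of_injective _ β.2.1, Finset.card_univ, Fintype.card_fin]
        have := ih (Finset.univ.image β.1)
        rw [pathCount] at this
        rw [this, hcard]
      rw [Finset.sum_congr rfl (fun β _ => hsum β)]
      rw [sum_ite_card (fun β : {b : Fin (a (m+1)) → Fin q //
            Function.Injective b ∧ ∀ v, b v ∉ U} => c ∈ Finset.univ.image β.1)]
      rw [card_subtype_subtype (fun b : Fin (a (m+1)) → Fin q =>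
            Function.Injective b ∧ ∀ v, b v ∉ U) (fun b => ¬ c ∈ Finset.univ.image b)]
      have hT : Nat.card {b : Fin (a (m+1)) → Fin q // Function.Injective b ∧ ∀ v, b v ∉ U}
          = (q - U.card).descFactorial (a (m+1)) := card_inj_avoid q (a (m+1)) U
      by_cases hc : c ∈ U
      · rw [if_pos hc]
        have hall : Nat.card {b : Fin (a (m+1)) → Fin q //
              (Function.Injective b ∧ ∀ v, b v ∉ U) ∧ ¬ c ∈ Finset.univ.image b}
            = (q - U.card).descFactorial (a (m+1)) := by
          rw [Nat.card_congr (Equiv.subtypeEquivRight (fun b => ?_)), card_inj_avoid]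
          constructor
          · rintro ⟨h1, -⟩; exact h1
          · intro h1
            refine ⟨h1, fun hmem => ?_⟩
            obtain ⟨w, -, hw⟩ := Finset.mem_image.mp hmem
            exact h1.2 w (hw ▸ hc)
        rw [hall, hT, Nat.sub_self, Nat.zero_mul, Nat.zero_add]
        rw [show (GH q a (m+1) U.card).2
            = (q - U.card).descFactorial (a (m+1)) * (GH q a m (a (m+1))).1 from rfl]
      · rw [if_neg hc]
        have hnot : Nat.card {b : Fin (a (m+1)) → Fin q //
              (Function.Injective b ∧ ∀ v, b v ∉ U) ∧ ¬ c ∈ Finset.univ.image b}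
            = (q - U.card - 1).descFactorial (a (m+1)) :=
          card_inj_avoid_and_notmem q (a (m+1)) U c hc
        rw [hnot, hT]
        rw [show (GH q a (m+1) U.card).1
            = (q - U.card - 1).descFactorial (a (m+1)) * (GH q a m (a (m+1))).1
              + ((q - U.card).descFactorial (a (m+1))
                  - (q - U.card - 1).descFactorial (a (m+1))) * (GH q a m (a (m+1))).2 from rfl]
        exact Nat.add_comm _ _


def coloringEquivProper {V : Type} (G : SimpleGraph V) (α : Type) :
    G.Coloring α ≃ {f : V → α // ∀ x y, G.Adj x y → f x ≠ f y} :=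
  ⟨fun c => ⟨fun v => c v, fun _ _ h => c.valid h⟩,
   fun f => SimpleGraph.Coloring.mk f.1 (fun {x y} h => f.2 x y h),
   fun c => rfl, fun f => rfl⟩

section Theta
variable {n : ℕ} (q k : ℕ) (S : Fin n → List ℕ)

def MI (i : Fin n) : ℕ := (S i).length - 1
def AI (i : Fin n) : ℕ → ℕ := fun l => (S i).getD l 0

lemma hlenMI (hS : ∀ i, S i ≠ []) (i : Fin n) : (S i).length = MI S i + 1 := by
  have : (S i).length ≠ 0 := fun h => hS i (List.length_eq_zero_iff.mp h)
  unfold MI; omega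

lemma hgetAI (i : Fin n) (l : Fin (S i).length) : (S i).get l = AI S i l.1 := by
  show (S i).get l = (S i).getD l.1 0
  rw [List.getD_eq_getElem _ _ l.2, List.get_eq_getElem]

/-- the proper colourings of the clique-theta graph -/
def ThetaProper : Type :=
  {f : CliqueThetaVertex 1 S k → Fin q //
      ∀ x y, (cliqueThetaGraph 1 S k).Adj x y → f x ≠ f y}

/-- the structured data equivalent to a proper colouring -/
def ThetaData : Type :=
  Σ _c : Fin q, Σ φ : {φ : Fin k → Fin q // Function.Injective φ},
    Π i : Fin n, {g : PathV (MI S i) (AI S i) → Fin q //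
      Good q (MI S i) (AI S i) _c (Finset.univ.image φ.1) g}

def thetaPathPart (hS : ∀ i, S i ≠ []) (f : ThetaProper q k S) (i : Fin n) :
    (PathV (MI S i) (AI S i) → Fin q) := fun x =>
  f.1 (Sum.inr (Sum.inl ⟨i, ⟨⟨x.1.1, lt_of_lt_of_eq x.1.2 (hlenMI S hS i).symm⟩,
    ⟨x.2.1, lt_of_lt_of_eq x.2.2 (hgetAI S i ⟨x.1.1, lt_of_lt_of_eq x.1.2 (hlenMI S hS i).symm⟩).symm⟩⟩⟩))

lemma thetaPathPart_good (hS : ∀ i, S i ≠ []) (f : ThetaProper q k S) (i : Fin n) :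
    Good q (MI S i) (AI S i) (f.1 (Sum.inl 0))
      (Finset.univ.image (fun u => f.1 (Sum.inr (Sum.inr u))))
      (thetaPathPart q k S hS f i) := by
  refine ⟨?_, ?_, ?_⟩
  · -- properness
    rintro ⟨⟨lx, hlx⟩, vx⟩ ⟨⟨ly, hly⟩, vy⟩ hne hrel
    apply f.2
    refine cliqueThetaGraph_adj_iff.mpr ⟨fun hEq => ?_, Or.inl ⟨rfl, hrel⟩⟩
    simp only [Sum.inr.injEq, Sum.inl.injEq, Sigma.mk.inj_iff, heq_eq_eq, true_and] at hEq
    obtain ⟨h1, h2⟩ := hEq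
    have hll : lx = ly := congrArg Fin.val h1
    subst hll
    have h2' := eq_of_heq h2
    simp only [Fin.mk.injEq] at h2'
    have hvv : vx.1 = vy.1 := h2'
    obtain rfl : vx = vy := Fin.ext hvv
    exact hne rfl
  · -- first clique avoids c
    intro v
    exact f.2 (Sum.inr (Sum.inl ⟨i, ⟨⟨0, _⟩, ⟨v.1, _⟩⟩⟩)) (Sum.inl 0)
      (cliqueThetaGraph_adj_iff.mpr ⟨fun hEq => Sum.inr_ne_inl hEq, Or.inr rfl⟩)
  · -- last clique avoids image of terminal colouring
    intro v hmem
    simp only [Finset.mem_image, Finset.mem_univ, true_and] at hmem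
    obtain ⟨u, hu⟩ := hmem
    refine f.2 (Sum.inr (Sum.inl ⟨i, ⟨⟨MI S i, ?_⟩, ⟨v.1, ?_⟩⟩⟩)) (Sum.inr (Sum.inr u))
      (cliqueThetaGraph_adj_iff.mpr ⟨fun hEq => by simp at hEq, Or.inl ?_⟩) hu.symm
    · rw [hlenMI S hS i]; omega
    · show v.1 < (S i).get _
      rw [hgetAI S i]; exact v.2
    · show MI S i + 1 = (S i).length
      rw [hlenMI S hS i]

def thetaFwd (hS : ∀ i, S i ≠ []) (f : ThetaProper q k S) : ThetaData q k S :=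
  ⟨f.1 (Sum.inl 0),
    ⟨⟨fun u => f.1 (Sum.inr (Sum.inr u)), fun u w h => by
        by_contra hne
        exact f.2 (Sum.inr (Sum.inr u)) (Sum.inr (Sum.inr w))
          (cliqueThetaGraph_adj_iff.mpr ⟨fun hEq => hne (by simpa using hEq), Or.inl trivial⟩) h⟩,
      fun i => ⟨thetaPathPart q k S hS f i, thetaPathPart_good q k S hS f i⟩⟩⟩

def thetaBwdFun (hS : ∀ i, S i ≠ []) (d : ThetaData q k S) : CliqueThetaVertex 1 S k → Fin q := fun x =>
  match x with
  | Sum.inl _ => d.1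
  | Sum.inr (Sum.inr u) => d.2.1.1 u
  | Sum.inr (Sum.inl ⟨i, l, v⟩) => (d.2.2 i).1
      ⟨⟨l.1, lt_of_lt_of_eq l.2 (by rw [hlenMI S hS i])⟩,
       ⟨v.1, lt_of_lt_of_eq v.2 (hgetAI S i l)⟩⟩

lemma thetaBwd_oneSide (hS : ∀ i, S i ≠ []) (d : ThetaData q k S) :
    ∀ x y : CliqueThetaVertex 1 S k, x ≠ y → cliqueThetaRel 1 S k x y →
      thetaBwdFun q k S hS d x ≠ thetaBwdFun q k S hS d y := by
  intro x y hne hrel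
  rcases x with a | ⟨i, l, v⟩ | u <;> rcases y with b | ⟨i', l', v'⟩ | w
  · exact (hne (by rw [Subsingleton.elim a b])).elim
  · -- apex vs first clique
    have h0 : l'.1 = 0 := hrel
    rcases l' with ⟨lv, hlv⟩
    simp only at h0
    subst h0
    exact ((d.2.2 i').2.2.1 ⟨v'.1, lt_of_lt_of_eq v'.2 (hgetAI S i' ⟨0, hlv⟩)⟩).symm
  · exact hrel.elim
  · exact hrel.elim
  · -- internal
    obtain ⟨hii, hll⟩ := (hrel : i.1 = i'.1 ∧ (l.1 = l'.1 ∨ l.1 + 1 = l'.1))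
    obtain rfl : i = i' := Fin.ext hii
    apply (d.2.2 i).2.1
    · intro hEq
      rcases l with ⟨lv, hl⟩
      rcases l' with ⟨lv', hl'⟩
      have h1 : lv = lv' := congrArg (fun z => z.1.1) hEq
      subst h1
      have h2a := eq_of_heq (Sigma.mk.inj_iff.mp hEq).2
      simp only [Fin.mk.injEq] at h2a
      have h2 : v.1 = v'.1 := h2a
      obtain rfl : v = v' := Fin.ext h2
      exact hne rfl
    · exact hll
  · -- last clique vs terminal
    have hlast : l.1 + 1 = (S i).length := hrel
    rcases l with ⟨lv, hl⟩
    simp only at hlast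
    obtain rfl : lv = MI S i := by have := hlenMI S hS i; omega
    intro hEqv
    refine (d.2.2 i).2.2.2 ⟨v.1, lt_of_lt_of_eq v.2 (hgetAI S i ⟨MI S i, hl⟩)⟩ ?_
    refine Finset.mem_image.mpr ⟨w, Finset.mem_univ w, ?_⟩
    exact hEqv.symm
  · exact hrel.elim
  · exact hrel.elim
  · -- terminal clique
    intro hval
    apply hne
    rw [d.2.1.2 hval]

def thetaBwd (hS : ∀ i, S i ≠ []) (d : ThetaData q k S) : ThetaProper q k S :=
  ⟨thetaBwdFun q k S hS d, by
    intro x y hAdj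
    obtain ⟨hne, hrel | hrel⟩ := cliqueThetaGraph_adj_iff.mp hAdj
    · exact thetaBwd_oneSide q k S hS d x y hne hrel
    · exact fun h => thetaBwd_oneSide q k S hS d y x hne.symm hrel h.symm⟩

def thetaEquiv (hS : ∀ i, S i ≠ []) : ThetaProper q k S ≃ ThetaData q k S := by
  refine ⟨thetaFwd q k S hS, thetaBwd q k S hS, ?_, ?_⟩
  · intro f
    apply Subtype.ext
    funext x
    rcases x with a | ⟨i, l, v⟩ | u
    · show f.1 (Sum.inl 0) = f.1 (Sum.inl a)
      rw [Subsingleton.elim (0 : Fin 1) a]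
    · rfl
    · rfl
  · intro d
    rfl

end Theta


open Finset


lemma theta_card_eq {n : ℕ} (q k : ℕ) (S : Fin n → List ℕ) (hS : ∀ i, S i ≠ []) :
    Nat.card ((cliqueThetaGraph 1 S k).Coloring (Fin q))
      = q * ((q.descFactorial k - (q-1).descFactorial k)
              * ∏ i : Fin n, (GH q (AI S i) (MI S i) k).2
          + (q-1).descFactorial k * ∏ i : Fin n, (GH q (AI S i) (MI S i) k).1) := by
  classical
  rw [Nat.card_congr ((coloringEquivProper (cliqueThetaGraph 1 S k) (Fin q)).trans
    (thetaEquiv q k S hS))]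
  letI : Fintype {φ : Fin k → Fin q // Function.Injective φ} := Fintype.ofFinite _
  rw [show Nat.card (ThetaData q k S)
      = Nat.card (Σ _c : Fin q, Σ φ : {φ : Fin k → Fin q // Function.Injective φ},
          Π i : Fin n, {g : PathV (MI S i) (AI S i) → Fin q //
            Good q (MI S i) (AI S i) _c (Finset.univ.image φ.1) g}) from rfl]
  rw [ncard_sigma]
  have inner : ∀ c : Fin q,
      Nat.card (Σ φ : {φ : Fin k → Fin q // Function.Injective φ},
          Π i : Fin n, {g : PathV (MI S i) (AI S i) → Fin q //
            Good q (MI S i) (AI S i) c (Finset.univ.image φ.1) g})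
        = ((q.descFactorial k - (q-1).descFactorial k)
              * ∏ i : Fin n, (GH q (AI S i) (MI S i) k).2
          + (q-1).descFactorial k * ∏ i : Fin n, (GH q (AI S i) (MI S i) k).1) := by
    intro c
    rw [ncard_sigma]
    have hterm : ∀ φ : {φ : Fin k → Fin q // Function.Injective φ},
        Nat.card (Π i : Fin n, {g : PathV (MI S i) (AI S i) → Fin q //
            Good q (MI S i) (AI S i) c (Finset.univ.image φ.1) g})
          = if c ∈ Finset.univ.image φ.1
              then ∏ i : Fin n, (GH q (AI S i) (MI S i) k).2
              else ∏ i : Fin n, (GH q (AI S i) (MI S i) k).1 := by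
      intro φ
      rw [Nat.card_pi]
      have hcard : (Finset.univ.image φ.1).card = k := by
        rw [Finset.card_image_of_injective _ φ.2, Finset.card_univ, Fintype.card_fin]
      have hfac : ∀ i : Fin n,
          Nat.card {g : PathV (MI S i) (AI S i) → Fin q //
              Good q (MI S i) (AI S i) c (Finset.univ.image φ.1) g}
            = if c ∈ Finset.univ.image φ.1
                then (GH q (AI S i) (MI S i) k).2 else (GH q (AI S i) (MI S i) k).1 := by
        intro i
        have := pathCount_eq q (AI S i) c (MI S i) (Finset.univ.image φ.1)
        rw [pathCount, hcard] at this
        exact this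
      rw [Finset.prod_congr rfl (fun i _ => hfac i)]
      by_cases h : c ∈ Finset.univ.image φ.1
      · simp only [if_pos h]
      · simp only [if_neg h]
    rw [Finset.sum_congr rfl (fun φ _ => hterm φ)]
    rw [sum_ite_card (fun φ : {φ : Fin k → Fin q // Function.Injective φ} =>
          c ∈ Finset.univ.image φ.1)]
    have hTot : Nat.card {φ : Fin k → Fin q // Function.Injective φ} = q.descFactorial k := by
      have e : {φ : Fin k → Fin q // Function.Injective φ}
          ≃ {φ : Fin k → Fin q // Function.Injective φ ∧ ∀ v, φ v ∉ (∅ : Finset (Fin q))} :=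
        Equiv.subtypeEquivRight (fun φ => by simp)
      rw [Nat.card_congr e, card_inj_avoid]
      simp
    have hNot : Nat.card {φ : {φ : Fin k → Fin q // Function.Injective φ} //
          ¬ c ∈ Finset.univ.image φ.1} = (q-1).descFactorial k := by
      rw [card_subtype_subtype (fun φ : Fin k → Fin q => Function.Injective φ)
        (fun φ => ¬ c ∈ Finset.univ.image φ)]
      have e : {φ : Fin k → Fin q // Function.Injective φ ∧ ¬ c ∈ Finset.univ.image φ}
          ≃ {φ : Fin k → Fin q // (Function.Injective φ ∧ ∀ v, φ v ∉ (∅ : Finset (Fin q)))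
              ∧ ¬ c ∈ Finset.univ.image φ} :=
        Equiv.subtypeEquivRight (fun φ => by simp)
      rw [Nat.card_congr e, card_inj_avoid_and_notmem q k ∅ c (by simp)]
      simp
    rw [hTot, hNot]
  rw [Finset.sum_congr rfl (fun c _ => inner c), Finset.sum_const, Finset.card_univ,
    Fintype.card_fin, smul_eq_mul]


lemma fallZ_congr {x y : ℤ} (t : ℕ) (h : x = y) : fallZ x t = fallZ y t := by rw [h]

lemma fallPoly_eval (Y : Polynomial ℤ) (m : ℕ) (x : ℤ) :
    (fallPoly Y m).eval x = fallZ (Y.eval x) m := by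
  simp [fallPoly, fallZ, Polynomial.eval_prod]

lemma prodL_eval_range (L : List ℕ) (x : ℤ) :
    (prodL L).eval x = ∏ j ∈ range L.length, (x - L.getD j 0) := by
  induction L with
  | nil => simp [prodL]
  | cons a t ih =>
      have hstep : prodL (a :: t) = (X - C (a:ℤ)) * prodL t := by simp [prodL]
      rw [List.length_cons, Finset.prod_range_succ']
      simp only [List.getD_cons_succ, List.getD_cons_zero]
      rw [← ih, hstep]
      simp [mul_comm]

lemma negProd_getD (L : List ℕ) :
    negProd L = ∏ j ∈ range L.length, (-(L.getD j 0 : ℤ)) := by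
  induction L with
  | nil => simp [negProd]
  | cons a t ih =>
      have hstep : negProd (a :: t) = (-(a:ℤ)) * negProd t := by simp [negProd]
      rw [List.length_cons, Finset.prod_range_succ']
      simp only [List.getD_cons_succ, List.getD_cons_zero]
      rw [← ih, hstep]
      simp [mul_comm]

lemma prodL_append_single (L : List ℕ) (b : ℕ) :
    prodL (L ++ [b]) = prodL L * (X - C (b:ℤ)) := by simp [prodL]

lemma negProd_append_single (L : List ℕ) (b : ℕ) :
    negProd (L ++ [b]) = negProd L * (-(b:ℤ)) := by simp [negProd]


lemma main_eval (m₀ : ℕ) (S : Fin (m₀ + 2) → List ℕ)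
    (hS : ∀ i, S i ≠ []) (hpos : ∀ i, ∀ a ∈ S i, 0 < a)
    (k : ℕ) (hk : 0 < k)
    (rA rB : Fin (m₀ + 2) → Polynomial ℤ)
    (hrA : ∀ i, X * rA i = prodL (S i) - C (negProd (S i)))
    (hrB : ∀ i, X * rB i = prodL (S i ++ [k]) - C (negProd (S i ++ [k])))
    (q : ℕ) (hq : ∀ i, (S i).sum + k + 2 ≤ q) :
    ((q * ((q.descFactorial k - (q-1).descFactorial k)
            * ∏ i : Fin (m₀+2), (GH q (AI S i) (MI S i) k).2
        + (q-1).descFactorial k * ∏ i : Fin (m₀+2), (GH q (AI S i) (MI S i) k).1) : ℕ) : ℤ)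
    = Polynomial.eval (q:ℤ)
        ((fallPoly X ((S (Fin.last (m₀ + 1))).getLastD 0 + k)
          * (∏ i ∈ Finset.univ.erase (Fin.last (m₀ + 1)),
              fallPoly (X - C ((k : ℤ) + 1)) ((S i).getLastD 0 - 1))
          * ∏ i : Fin (m₀ + 2), ∏ l ∈ Finset.range ((S i).length - 1),
              fallPoly (X - C (((S i).getD (l + 1) 0 : ℤ) + 1)) ((S i).getD l 0 - 1))
        * (C (k : ℤ) * (X - C (k : ℤ)) ^ (m₀ + 1) * ∏ i : Fin (m₀ + 2), rA i
            + ∏ i : Fin (m₀ + 2), rB i)) := by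
  classical
  have hq1 : 1 ≤ q := by have := hq ⟨0, by omega⟩; omega
  have hqk : k + 1 ≤ q := by have := hq ⟨0, by omega⟩; omega
  have hQ0 : (q:ℤ) ≠ 0 := by
    intro h
    omega
  have hposA : ∀ (i : Fin (m₀+2)) (l : ℕ), l < (S i).length → 1 ≤ AI S i l := by
    intro i l hl
    have h1 : (S i).getD l 0 = (S i)[l] := List.getD_eq_getElem _ _ hl
    have hm : (S i)[l] ∈ S i := List.getElem_mem _
    have h2 := hpos i _ hm
    show 1 ≤ (S i).getD l 0
    omega
  have hlen : ∀ i, (S i).length = MI S i + 1 := hlenMI S hS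
  have hsumA : ∀ i, ∑ l ∈ range (MI S i + 1), AI S i l = (S i).sum := by
    intro i
    rw [← hlen i]
    exact list_getD_sum (S i)
  have hGHc := fun i => GH_closed q (AI S i) (MI S i) k
    (fun l hl => hposA i l (by rw [hlen i]; omega))
    (by rw [hsumA i]; have := hq i; omega)
  have hrAe : ∀ i, (q:ℤ) * (rA i).eval (q:ℤ)
      = (∏ l ∈ range (MI S i + 1), ((q:ℤ) - AI S i l))
        - (∏ l ∈ range (MI S i + 1), (-(AI S i l : ℤ))) := by
    intro i
    have h := congrArg (Polynomial.eval (q:ℤ)) (hrA i)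
    simp only [Polynomial.eval_mul, Polynomial.eval_X, Polynomial.eval_sub,
      Polynomial.eval_C] at h
    rw [h, prodL_eval_range, negProd_getD, hlen i]
    rfl
  have hrBe : ∀ i, (q:ℤ) * (rB i).eval (q:ℤ)
      = (∏ l ∈ range (MI S i + 1), ((q:ℤ) - AI S i l)) * ((q:ℤ) - k)
        - (∏ l ∈ range (MI S i + 1), (-(AI S i l : ℤ))) * (-(k:ℤ)) := by
    intro i
    have h := congrArg (Polynomial.eval (q:ℤ)) (hrB i)
    rw [prodL_append_single, negProd_append_single] at h
    simp only [Polynomial.eval_mul, Polynomial.eval_X, Polynomial.eval_sub,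
      Polynomial.eval_C] at h
    rw [h, prodL_eval_range, negProd_getD, hlen i]
    rfl
  have key1 : ∀ i, ((GH q (AI S i) (MI S i) k).1 : ℤ)
      = (∏ l ∈ range (MI S i), fallZ ((q:ℤ) - AI S i (l+1) - 1) (AI S i l - 1))
        * fallZ ((q:ℤ) - k - 1) (AI S i (MI S i) - 1) * (rB i).eval (q:ℤ) := by
    intro i
    apply mul_left_cancel₀ hQ0
    rw [(hGHc i).1, ← hrBe i]
    ring
  have key2 : ∀ i, ((GH q (AI S i) (MI S i) k).2 : ℤ)
      = (∏ l ∈ range (MI S i), fallZ ((q:ℤ) - AI S i (l+1) - 1) (AI S i l - 1))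
        * fallZ ((q:ℤ) - k - 1) (AI S i (MI S i) - 1) * ((q:ℤ) - k) * (rA i).eval (q:ℤ) := by
    intro i
    apply mul_left_cancel₀ hQ0
    rw [(hGHc i).2, ← hrAe i]
    ring
  have hdm : (q-1).descFactorial k ≤ q.descFactorial k := descFactorial_mono _ _ _ (by omega)
  push_cast [Nat.cast_sub hdm]
  rw [Finset.prod_congr rfl (fun i _ => key2 i), Finset.prod_congr rfl (fun i _ => key1 i)]
  simp only [Finset.prod_mul_distrib, Finset.prod_const, Finset.card_univ, Fintype.card_fin]
  have e2 : ((q.descFactorial k : ℕ) : ℤ) = fallZ (q:ℤ) k :=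
    cast_descFactorial _ _ (by omega)
  have e1 : (((q-1 : ℕ).descFactorial k : ℕ) : ℤ) = fallZ ((q:ℤ)-1) k := by
    rw [cast_descFactorial _ _ (by omega)]
    exact fallZ_congr _ (by omega)
  have e6 : (q:ℤ) * fallZ ((q:ℤ)-1) k = fallZ (q:ℤ) k * ((q:ℤ) - k) := by
    rw [← fallZ_succ', fallZ_succ]
  rw [e1, e2]
  -- now the RHS evaluation
  have hgl : ∀ i : Fin (m₀+2), (S i).getLastD 0 = AI S i (MI S i) :=
    fun i => getLastD_eq_getD (S i) (hS i)
  have hMI : ∀ i : Fin (m₀+2), (S i).length - 1 = MI S i := fun i => rfl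
  have hAI : ∀ (i : Fin (m₀+2)) (l : ℕ), (S i).getD l 0 = AI S i l := fun i l => rfl
  simp only [Polynomial.eval_mul, Polynomial.eval_add, Polynomial.eval_pow,
    Polynomial.eval_sub, Polynomial.eval_C, Polynomial.eval_X, Polynomial.eval_prod,
    fallPoly_eval, hgl, hMI, hAI]
  have hE2 : ∏ x ∈ Finset.univ.erase (Fin.last (m₀+1)),
        fallZ ((q:ℤ) - ((k:ℤ)+1)) (AI S x (MI S x) - 1)
      = ∏ x ∈ Finset.univ.erase (Fin.last (m₀+1)),
        fallZ ((q:ℤ) - k - 1) (AI S x (MI S x) - 1) :=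
    Finset.prod_congr rfl (fun x _ => fallZ_congr _ (by ring))
  have hE3 : ∀ x : Fin (m₀+2),
      ∏ l ∈ range (MI S x), fallZ ((q:ℤ) - (AI S x (l+1) + 1)) (AI S x l - 1)
      = ∏ l ∈ range (MI S x), fallZ ((q:ℤ) - AI S x (l+1) - 1) (AI S x l - 1) :=
    fun x => Finset.prod_congr rfl (fun l _ => fallZ_congr _ (by ring))
  rw [hE2, Finset.prod_congr rfl (fun x _ => hE3 x)]
  obtain ⟨tL, htL⟩ : ∃ t, AI S (Fin.last (m₀+1)) (MI S (Fin.last (m₀+1))) = t + 1 :=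
    ⟨AI S (Fin.last (m₀+1)) (MI S (Fin.last (m₀+1))) - 1, by
      have := hposA (Fin.last (m₀+1)) (MI S (Fin.last (m₀+1))) (by rw [hlen]; omega)
      omega⟩
  rw [htL, show tL + 1 + k = k + (tL + 1) from by omega, fallZ_add, fallZ_succ']
  rw [← Finset.mul_prod_erase Finset.univ
      (fun x => fallZ ((q:ℤ) - k - 1) (AI S x (MI S x) - 1)) (Finset.mem_univ (Fin.last (m₀+1)))]
  rw [htL]
  simp only [Nat.add_sub_cancel]
  linear_combination
    ((∏ x : Fin (m₀+2), ∏ l ∈ range (MI S x), fallZ ((q:ℤ) - AI S x (l+1) - 1) (AI S x l - 1))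
      * fallZ ((q:ℤ) - k - 1) tL
      * (∏ x ∈ Finset.univ.erase (Fin.last (m₀+1)),
          fallZ ((q:ℤ) - k - 1) (AI S x (MI S x) - 1))
      * ((∏ j : Fin (m₀+2), Polynomial.eval (q:ℤ) (rB j))
          - ((q:ℤ) - k)^(m₀+2) * ∏ j : Fin (m₀+2), Polynomial.eval (q:ℤ) (rA j))) * e6

/-- The chromatic polynomial of the clique-theta graph
`T(1, S_1, …, S_n, k)` (with `n = m₀ + 2 ≥ 2`), where `rA i` is the polynomial
`r(1, a_{i(1)}, …, a_{i(m_i)}; X)` and `rB i` is `r(1, a_{i(1)}, …, a_{i(m_i)}, k; X)`,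
each characterised by `X · r = ∏ (X - a) - ∏ (-a)`. -/
theorem chromatic_poly_of_clique_theta
    (m₀ : ℕ) (S : Fin (m₀ + 2) → List ℕ)
    (hS : ∀ i, S i ≠ []) (hpos : ∀ i, ∀ a ∈ S i, 0 < a)
    (k : ℕ) (hk : 0 < k)
    (P : Polynomial ℤ) (hP : IsChromaticPoly (cliqueThetaGraph 1 S k) P)
    (rA rB : Fin (m₀ + 2) → Polynomial ℤ)
    (hrA : ∀ i, X * rA i = prodL (S i) - C (negProd (S i)))
    (hrB : ∀ i, X * rB i = prodL (S i ++ [k]) - C (negProd (S i ++ [k]))) :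
    P = (fallPoly X ((S (Fin.last (m₀ + 1))).getLastD 0 + k)
          * (∏ i ∈ Finset.univ.erase (Fin.last (m₀ + 1)),
              fallPoly (X - C ((k : ℤ) + 1)) ((S i).getLastD 0 - 1))
          * ∏ i : Fin (m₀ + 2), ∏ l ∈ Finset.range ((S i).length - 1),
              fallPoly (X - C (((S i).getD (l + 1) 0 : ℤ) + 1)) ((S i).getD l 0 - 1))
        * (C (k : ℤ) * (X - C (k : ℤ)) ^ (m₀ + 1) * ∏ i : Fin (m₀ + 2), rA i
            + ∏ i : Fin (m₀ + 2), rB i) := by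
  classical
  apply Polynomial.eq_of_infinite_eval_eq
  apply Set.infinite_of_injective_forall_mem
    (f := fun t : ℕ => ((t + ((∑ i : Fin (m₀+2), (S i).sum) + k + 2) : ℕ) : ℤ))
  · intro a b hab
    simp only at hab
    omega
  · intro t
    simp only [Set.mem_setOf_eq]
    rw [hP (t + ((∑ i : Fin (m₀+2), (S i).sum) + k + 2))]
    rw [theta_card_eq (t + ((∑ i : Fin (m₀+2), (S i).sum) + k + 2)) k S hS]
    exact main_eval m₀ S hS hpos k hk rA rB hrA hrB
      (t + ((∑ i : Fin (m₀+2), (S i).sum) + k + 2))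
      (fun i => by
        have hle : (S i).sum ≤ ∑ j : Fin (m₀+2), (S j).sum :=
          Finset.single_le_sum (f := fun j => (S j).sum)
            (fun j _ => Nat.zero_le _) (Finset.mem_univ i)
        omega)
end

section
/- Let n ≥ 2, let a_1,…,a_n and k be positive integers. Then the chromatic polynomial of the clique-theta graph T(1,(a_1),…,(a_n),k), in which every internal clique-path tuple has length one, satisfies P(X) = (X)_{a_n+k} · ∏_{i=1}^{n−1}(X−k−1)_{a_i−1} · [k·(X−k)^{n−1} + ∏_{i=1}^{n}(X−a_i−k)]. -/
open Polynomial

section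
variable {n : ℕ} (a : Fin n → ℕ) (k q : ℕ)

abbrev S' : Fin n → List ℕ := fun i => [a i]
abbrev V' := CliqueThetaVertex 1 (S' a) k
abbrev G' := cliqueThetaGraph 1 (S' a) k

def vu : V' a k := Sum.inl 0
def vA (i : Fin n) (v : Fin (a i)) : V' a k := Sum.inr (Sum.inl ⟨i, ⟨0, Nat.one_pos⟩, v⟩)
def vK (t : Fin k) : V' a k := Sum.inr (Sum.inr t)

variable {a k}

lemma adj_KK {s t : Fin k} (h : s ≠ t) : (G' a k).Adj (vK a k s) (vK a k t) :=
  ⟨fun he => h (by simpa [vK] using he), Or.inl trivial⟩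

lemma adj_uA (i : Fin n) (v : Fin (a i)) : (G' a k).Adj (vu a k) (vA a k i v) :=
  ⟨by simp [vu, vA], Or.inl rfl⟩

lemma adj_AK (i : Fin n) (v : Fin (a i)) (t : Fin k) :
    (G' a k).Adj (vA a k i v) (vK a k t) :=
  ⟨by simp [vA, vK], Or.inl rfl⟩

lemma adj_AA (i : Fin n) {v w : Fin (a i)} (h : v ≠ w) :
    (G' a k).Adj (vA a k i v) (vA a k i w) :=
  ⟨fun he => h (by simpa [vA] using he), Or.inl ⟨rfl, Or.inl rfl⟩⟩

end

section
variable {n : ℕ} {a : Fin n → ℕ} {k q : ℕ}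

def Tgt (a : Fin n → ℕ) (k q : ℕ) : Type :=
  Σ gc : (Fin k ↪ Fin q) × Fin q,
    ∀ i : Fin n, Fin (a i) ↪ {x : Fin q // (∀ t, gc.1 t ≠ x) ∧ gc.2 ≠ x}

def fwd (C : (G' a k).Coloring (Fin q)) : Tgt a k q :=
  ⟨(⟨fun t => C (vK a k t), fun s t h => by
      by_contra hne
      exact C.valid (adj_KK hne) h⟩, C (vu a k)),
   fun i => ⟨fun v => ⟨C (vA a k i v),
      fun t => (C.valid (adj_AK i v t)).symm,
      C.valid (adj_uA i v)⟩,
    fun v w h => by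
      by_contra hne
      exact C.valid (adj_AA i hne) (congrArg Subtype.val h)⟩⟩

def bwdf (g : Fin k ↪ Fin q) (c : Fin q)
    (e : ∀ i : Fin n, Fin (a i) ↪ {x : Fin q // (∀ t, g t ≠ x) ∧ c ≠ x}) :
    V' a k → Fin q
  | Sum.inl _ => c
  | Sum.inr (Sum.inl ⟨i, ⟨0, _⟩, v⟩) => (e i v).1
  | Sum.inr (Sum.inl ⟨_, ⟨_+1, h⟩, _⟩) => absurd h (by simp)
  | Sum.inr (Sum.inr t) => g t

lemma bwdf_aux (g : Fin k ↪ Fin q) (c : Fin q)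
    (e : ∀ i : Fin n, Fin (a i) ↪ {x : Fin q // (∀ t, g t ≠ x) ∧ c ≠ x})
    (x y : V' a k) (hne : x ≠ y) (hrel : cliqueThetaRel 1 (S' a) k x y) :
    bwdf g c e x ≠ bwdf g c e y := by
  match x, y with
  | Sum.inl u, Sum.inl u' => exact absurd (by simp [Subsingleton.elim u u']) hne
  | Sum.inl u, Sum.inr (Sum.inl ⟨i, ⟨0, h⟩, v⟩) => exact (e i v).2.2
  | Sum.inl u, Sum.inr (Sum.inl ⟨i, ⟨l+1, h⟩, v⟩) => exact absurd h (by simp)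
  | Sum.inl u, Sum.inr (Sum.inr t) => exact absurd hrel (by simp [cliqueThetaRel])
  | Sum.inr (Sum.inl ⟨i, ⟨0, h⟩, v⟩), Sum.inl u => exact absurd hrel (by simp [cliqueThetaRel])
  | Sum.inr (Sum.inl ⟨i, ⟨l+1, h⟩, v⟩), Sum.inl u => exact absurd h (by simp)
  | Sum.inr (Sum.inr t), Sum.inl u => exact absurd hrel (by simp [cliqueThetaRel])
  | Sum.inr (Sum.inr s), Sum.inr (Sum.inr t) =>
      exact fun he => hne (by simp [g.injective he])
  | Sum.inr (Sum.inr s), Sum.inr (Sum.inl ⟨i, l, v⟩) =>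
      exact absurd hrel (by simp [cliqueThetaRel])
  | Sum.inr (Sum.inl ⟨i, ⟨0, h⟩, v⟩), Sum.inr (Sum.inr t) =>
      exact fun he => (e i v).2.1 t he.symm
  | Sum.inr (Sum.inl ⟨i, ⟨l+1, h⟩, v⟩), Sum.inr (Sum.inr t) => exact absurd h (by simp)
  | Sum.inr (Sum.inl ⟨i, ⟨0, h⟩, v⟩), Sum.inr (Sum.inl ⟨i', ⟨0, h'⟩, v'⟩) => 
      obtain ⟨hi, -⟩ := hrel
      have : i = i' := Fin.ext hi
      subst this
      intro heq
      exact hne (by simp [(e i).injective (Subtype.ext heq)])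
  | Sum.inr (Sum.inl ⟨i, ⟨0, h⟩, v⟩), Sum.inr (Sum.inl ⟨i', ⟨l'+1, h'⟩, v'⟩) =>
      exact absurd h' (by simp)
  | Sum.inr (Sum.inl ⟨i, ⟨l+1, h⟩, v⟩), Sum.inr (Sum.inl ⟨i', l', v'⟩) =>
      exact absurd h (by simp)

def bwd (d : Tgt a k q) : (G' a k).Coloring (Fin q) :=
  SimpleGraph.Coloring.mk (bwdf d.1.1 d.1.2 d.2) (by
    rintro x y ⟨hne, hrel | hrel⟩
    · exact bwdf_aux _ _ _ x y hne hrel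
    · exact (bwdf_aux _ _ _ y x hne.symm hrel).symm)

end

section
variable {n : ℕ} {a : Fin n → ℕ} {k q : ℕ}

def colEquiv : (G' a k).Coloring (Fin q) ≃ Tgt a k q where
  toFun := fwd
  invFun := bwd
  left_inv := by
    intro C
    apply DFunLike.ext
    intro x
    match x with
    | Sum.inl u => 
        show C (vu a k) = C (Sum.inl u)
        congr 1
        simp [vu, Subsingleton.elim u 0]
    | Sum.inr (Sum.inl ⟨i, ⟨0, h⟩, v⟩) => rfl
    | Sum.inr (Sum.inl ⟨i, ⟨l+1, h⟩, v⟩) => exact absurd h (by simp)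
    | Sum.inr (Sum.inr t) => rfl
  right_inv := fun d => rfl

end

section
variable {n : ℕ} {a : Fin n → ℕ} {k q : ℕ}

lemma card_subtype (g : Fin k ↪ Fin q) (c : Fin q) :
    Nat.card {x : Fin q // (∀ t, g t ≠ x) ∧ c ≠ x} =
      if ∃ t, g t = c then q - k else q - k - 1 := by
  classical
  rw [Nat.card_eq_fintype_card, Fintype.card_subtype]
  have hfil : Finset.univ.filter (fun x : Fin q => (∀ t, g t ≠ x) ∧ c ≠ x)
      = (insert c (Finset.image g Finset.univ))ᶜ := by
    ext x
    simp [eq_comm, and_comm]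
  rw [hfil, Finset.card_compl, Fintype.card_fin]
  have himg : (Finset.image g Finset.univ).card = k := by
    rw [Finset.card_image_of_injective _ g.injective, Finset.card_univ, Fintype.card_fin]
  by_cases hc : ∃ t, g t = c
  · have : c ∈ Finset.image g Finset.univ := by
      obtain ⟨t, ht⟩ := hc; exact Finset.mem_image.2 ⟨t, Finset.mem_univ t, ht⟩
    rw [if_pos hc, Finset.insert_eq_self.2 this, himg]
  · have : c ∉ Finset.image g Finset.univ := by
      simp only [Finset.mem_image] at *
      rintro ⟨t, -, ht⟩; exact hc ⟨t, ht⟩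
    rw [if_neg hc, Finset.card_insert_of_notMem this, himg]
    omega

lemma card_Tgt : Nat.card (Tgt a k q)
    = q.descFactorial k * (k * ∏ i, (q - k).descFactorial (a i)
        + (q - k) * ∏ i, (q - k - 1).descFactorial (a i)) := by
  classical
  show Nat.card (Σ gc : (Fin k ↪ Fin q) × Fin q, ∀ i : Fin n,
      Fin (a i) ↪ {x : Fin q // (∀ t, gc.1 t ≠ x) ∧ gc.2 ≠ x}) = _
  rw [Nat.card_eq_fintype_card, Fintype.card_sigma]
  simp only [← Nat.card_eq_fintype_card]
  have hfib : ∀ gc : (Fin k ↪ Fin q) × Fin q,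
      Nat.card (∀ i : Fin n, Fin (a i) ↪ {x : Fin q // (∀ t, gc.1 t ≠ x) ∧ gc.2 ≠ x})
        = ∏ i, (if ∃ t, gc.1 t = gc.2 then q - k else q - k - 1).descFactorial (a i) := by
    intro gc
    rw [Nat.card_pi]
    refine Finset.prod_congr rfl fun i _ => ?_
    rw [Nat.card_eq_fintype_card, Fintype.card_embedding_eq, Fintype.card_fin,
      ← Nat.card_eq_fintype_card, card_subtype]
  simp only [hfib]
  rw [Fintype.sum_prod_type]
  have hinner : ∀ g : Fin k ↪ Fin q,
      (∑ c : Fin q, ∏ i, (if ∃ t, g t = c then q - k else q - k - 1).descFactorial (a i))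
        = k * ∏ i, (q - k).descFactorial (a i)
          + (q - k) * ∏ i, (q - k - 1).descFactorial (a i) := by
    intro g
    have : ∀ c : Fin q,
        (∏ i, (if ∃ t, g t = c then q - k else q - k - 1).descFactorial (a i))
          = if ∃ t, g t = c then ∏ i, (q - k).descFactorial (a i)
            else ∏ i, (q - k - 1).descFactorial (a i) := by
      intro c; split_ifs <;> rfl
    simp only [this]
    rw [Finset.sum_ite, Finset.sum_const, Finset.sum_const]
    have h1 : (Finset.univ.filter (fun c : Fin q => ∃ t, g t = c)).card = k := by
      have : Finset.univ.filter (fun c : Fin q => ∃ t, g t = c)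
          = Finset.image g Finset.univ := by
        ext x; simp
      rw [this, Finset.card_image_of_injective _ g.injective, Finset.card_univ,
        Fintype.card_fin]
    have h2 : (Finset.univ.filter (fun c : Fin q => ¬∃ t, g t = c)).card = q - k := by
      rw [Finset.filter_not, Finset.card_sdiff_of_subset (Finset.filter_subset _ _), h1,
        Finset.card_univ, Fintype.card_fin]
    rw [h1, h2, smul_eq_mul, smul_eq_mul]
  simp only [hinner]
  rw [Finset.sum_const, Finset.card_univ, Fintype.card_embedding_eq, Fintype.card_fin,
    Fintype.card_fin, smul_eq_mul]

lemma card_colorings :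
    Nat.card ((G' a k).Coloring (Fin q))
    = q.descFactorial k * (k * ∏ i, (q - k).descFactorial (a i)
        + (q - k) * ∏ i, (q - k - 1).descFactorial (a i)) := by
  rw [Nat.card_congr (colEquiv (a := a) (k := k) (q := q)), card_Tgt]

end

lemma intDesc (m s : ℕ) :
    ((m.descFactorial s : ℕ) : ℤ) = ∏ t ∈ Finset.range s, ((m : ℤ) - t) := by
  rcases le_or_gt s m with h | h
  · rw [Nat.descFactorial_eq_prod_range, Nat.cast_prod]
    refine Finset.prod_congr rfl fun t ht => ?_
    have : t ≤ m := le_trans (le_of_lt (Finset.mem_range.1 ht)) h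
    rw [Nat.cast_sub this]
  · rw [Nat.descFactorial_eq_zero_iff_lt.2 h, Nat.cast_zero]
    refine (Finset.prod_eq_zero (Finset.mem_range.2 h) ?_).symm
    simp

section
variable {m₀ : ℕ} {a : Fin (m₀ + 2) → ℕ} {k q : ℕ}

lemma eval_rhs (hq : k + 1 ≤ q) (ha : ∀ i, 0 < a i) :
    (fallPoly X (a (Fin.last (m₀ + 1)) + k)
        * (∏ i ∈ Finset.univ.erase (Fin.last (m₀ + 1)),
            fallPoly (X - C ((k : ℤ) + 1)) (a i - 1))
        * (C (k : ℤ) * (X - C (k : ℤ)) ^ (m₀ + 1)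
            + ∏ i : Fin (m₀ + 2), (X - C ((a i : ℤ) + (k : ℤ))))).eval (q : ℤ)
    = ((q.descFactorial k * (k * ∏ i, (q - k).descFactorial (a i)
        + (q - k) * ∏ i, (q - k - 1).descFactorial (a i)) : ℕ) : ℤ) := by
  have hk : (↑(q - k) : ℤ) = (q : ℤ) - k := by
    rw [Nat.cast_sub (by omega)]
  set Q : ℤ := (q : ℤ) with hQ
  set D : Fin (m₀ + 2) → ℤ := fun i => ∏ t ∈ Finset.range (a i - 1), (Q - ((k : ℤ) + 1) - t)
    with hD
  have e2 : ∀ i, (((q - k).descFactorial (a i) : ℕ) : ℤ) = (Q - k) * D i := by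
    intro i
    rw [intDesc, show a i = (a i - 1) + 1 by have := ha i; omega, Finset.prod_range_succ']
    simp only [hk, Nat.cast_zero, sub_zero]
    rw [mul_comm]
    congr 1
    refine Finset.prod_congr rfl fun t _ => ?_
    push_cast; ring
  have e3 : ∀ i, (((q - k - 1).descFactorial (a i) : ℕ) : ℤ)
      = D i * (Q - ((a i : ℤ) + k)) := by
    intro i
    have hc : ((q - k - 1 : ℕ) : ℤ) = Q - k - 1 := by
      rw [Nat.cast_sub (by omega), Nat.cast_sub (by omega)]
      push_cast; ring
    conv_lhs => rw [intDesc, show a i = (a i - 1) + 1 by have := ha i; omega,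
      Finset.prod_range_succ]
    simp only [hc]
    congr 1
    · refine Finset.prod_congr rfl fun t _ => ?_
      ring
    · have h1 : ((a i - 1 : ℕ) : ℤ) = (a i : ℤ) - 1 := by have := ha i; omega
      rw [h1]; ring
  -- evaluate the polynomial side
  have hev : (fallPoly X (a (Fin.last (m₀ + 1)) + k)
        * (∏ i ∈ Finset.univ.erase (Fin.last (m₀ + 1)),
            fallPoly (X - C ((k : ℤ) + 1)) (a i - 1))
        * (C (k : ℤ) * (X - C (k : ℤ)) ^ (m₀ + 1)
            + ∏ i : Fin (m₀ + 2), (X - C ((a i : ℤ) + (k : ℤ))))).eval Q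
      = (∏ t ∈ Finset.range (a (Fin.last (m₀ + 1)) + k), (Q - t))
        * (∏ i ∈ Finset.univ.erase (Fin.last (m₀ + 1)), D i)
        * ((k : ℤ) * (Q - k) ^ (m₀ + 1) + ∏ i, (Q - ((a i : ℤ) + k))) := by
    simp [fallPoly, eval_prod, hD]
  rw [hev]
  -- first factor splits
  have hsplit : (∏ t ∈ Finset.range (a (Fin.last (m₀ + 1)) + k), (Q - t))
      = (∏ t ∈ Finset.range k, (Q - t)) * ((Q - k) * D (Fin.last (m₀ + 1))) := by
    rw [add_comm (a (Fin.last (m₀ + 1))) k, Finset.prod_range_add]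
    congr 1
    have : ∀ t : ℕ, (Q - ((k + t : ℕ) : ℤ)) = (Q - k) - t := by
      intro t; push_cast; ring
    calc (∏ t ∈ Finset.range (a (Fin.last (m₀ + 1))), (Q - ((k + t : ℕ) : ℤ)))
        = ∏ t ∈ Finset.range (a (Fin.last (m₀ + 1))), ((Q - k) - t) :=
          Finset.prod_congr rfl fun t _ => this t
      _ = (Q - k) * D (Fin.last (m₀ + 1)) := by
          rw [show a (Fin.last (m₀ + 1)) = (a (Fin.last (m₀ + 1)) - 1) + 1 by
              have := ha (Fin.last (m₀ + 1)); omega, Finset.prod_range_succ']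
          simp only [Nat.cast_zero, sub_zero]
          rw [mul_comm]
          congr 1
          refine Finset.prod_congr rfl fun t _ => ?_
          push_cast; ring
  rw [hsplit]
  -- the natural-number side
  push_cast
  simp only [e2, e3, hk]
  rw [intDesc]
  rw [Finset.prod_mul_distrib, Finset.prod_mul_distrib, Finset.prod_const,
    Finset.card_univ, Fintype.card_fin]
  rw [← Finset.mul_prod_erase Finset.univ D (Finset.mem_univ (Fin.last (m₀ + 1)))]
  ring
end


/-- The chromatic polynomial of the clique-theta graph
`T(1,(a_1),…,(a_n),k)` with all internal tuples of length one (`n = m₀ + 2 ≥ 2`):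
`P = (X)_{a_n+k} · ∏_{i=1}^{n-1} (X-k-1)_{a_i-1} · [k(X-k)^{n-1} + ∏_{i=1}^n (X-a_i-k)]`. -/
theorem chromatic_poly_of_clique_theta_singleton
    (m₀ : ℕ) (a : Fin (m₀ + 2) → ℕ) (ha : ∀ i, 0 < a i) (k : ℕ) (hk : 0 < k)
    (P : Polynomial ℤ)
    (hP : IsChromaticPoly (cliqueThetaGraph 1 (fun i => [a i]) k) P) :
    P = fallPoly X (a (Fin.last (m₀ + 1)) + k)
        * (∏ i ∈ Finset.univ.erase (Fin.last (m₀ + 1)),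
            fallPoly (X - C ((k : ℤ) + 1)) (a i - 1))
        * (C (k : ℤ) * (X - C (k : ℤ)) ^ (m₀ + 1)
            + ∏ i : Fin (m₀ + 2), (X - C ((a i : ℤ) + (k : ℤ)))) := by
  apply Polynomial.eq_of_infinite_eval_eq
  apply Set.infinite_of_injective_forall_mem
    (f := fun m : ℕ => ((k + 1 + m : ℕ) : ℤ))
  case hi =>
    intro x y h
    simp only at h
    exact_mod_cast Nat.add_left_cancel (Nat.cast_injective h)
  case hf =>
    intro m
    show P.eval _ = Polynomial.eval _ _
    rw [hP (k + 1 + m)]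
    rw [show Nat.card ((cliqueThetaGraph 1 (fun i => [a i]) k).Coloring (Fin (k + 1 + m)))
      = Nat.card ((G' a k).Coloring (Fin (k + 1 + m))) from rfl]
    rw [card_colorings, eval_rhs (by omega) ha]
end

section
/- Let n ≥ 2, let S_1,…,S_n be nonempty ordered tuples of positive integers with S_i = (a_{i(1)},…,a_{i(m_i)}), let k be a positive integer, and for a positive integer p let pS_i = (p·a_{i(1)},…,p·a_{i(m_i)}). If α is a non-integer complex chromatic root of the clique-theta graph T(1,S_1,…,S_n,k), then p·α is a chromatic root of the clique-theta graph T(1,pS_1,…,pS_n,pk). -/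
open Polynomial

/-! ### Auxiliary development -/

open Finset Function

namespace CTAux

/-- vertex type of a clique-path with internal clique sizes `L` -/
abbrev PV (L : List ℕ) : Type := Σ l : Fin L.length, Fin (L.get l)

/-- size of the next clique to the right: head of the list, or `k` for the terminal clique -/
def nsz (k : ℕ) : List ℕ → ℕ
  | [] => k
  | a :: _ => a

/-- the pair `(g, h)` of boundary-conditioned counts for a clique path, processed from the
left; `b` records whether the distinguished colour `x` belongs to the terminal colour set. -/
def pgh (q k : ℕ) (b : Bool) : List ℕ → ℕ × ℕ
  | [] => if b then (0, 1) else (1, 0)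
  | a :: rest =>
      ((q - nsz k rest - 1).descFactorial a * (pgh q k b rest).1
        + (q - nsz k rest).descFactorial a * (pgh q k b rest).2,
        a * (q - nsz k rest - 1).descFactorial (a - 1) * (pgh q k b rest).1)

/-- properness of a colouring of the internal cliques of a clique-path, with terminal
forbidden colour set `Y` -/
def PProp (q : ℕ) (Y : Finset (Fin q)) (L : List ℕ) (f : PV L → Fin q) : Prop :=
  (∀ (l : Fin L.length) (v v' : Fin (L.get l)), v ≠ v' → f ⟨l, v⟩ ≠ f ⟨l, v'⟩) ∧
  (∀ (l l' : Fin L.length) (v : Fin (L.get l)) (v' : Fin (L.get l')),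
      (l : ℕ) + 1 = (l' : ℕ) → f ⟨l, v⟩ ≠ f ⟨l', v'⟩) ∧
  (∀ (l : Fin L.length) (v : Fin (L.get l)), (l : ℕ) + 1 = L.length → f ⟨l, v⟩ ∉ Y)

/-- the first clique takes the colour `x` -/
def FirstMem (q : ℕ) (x : Fin q) (L : List ℕ) (f : PV L → Fin q) : Prop :=
  ∃ lv : PV L, (lv.1 : ℕ) = 0 ∧ f lv = x

/-! #### Generic cardinality helpers -/

lemma card_subtype_split {γ : Type*} [Finite γ] (P R : γ → Prop) :
    Nat.card {y : γ // P y} =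
      Nat.card {y : γ // P y ∧ R y} + Nat.card {y : γ // P y ∧ ¬ R y} := by
  classical
  rw [← Nat.card_sum]
  apply Nat.card_congr
  exact (Equiv.sumCompl (fun y : {y : γ // P y} => R y.1)).symm.trans
    (Equiv.sumCongr (Equiv.subtypeSubtypeEquivSubtypeInter P R)
      (Equiv.subtypeSubtypeEquivSubtypeInter P (fun y => ¬ R y)))

/-- split a sigma type along a predicate on the base, with constant fibre cardinalities on
each part -/
lemma card_sigma_const {B : Type*} [Finite B] {M : B → Type*} [∀ b, Finite (M b)]
    (m : ℕ) (hm : ∀ b, Nat.card (M b) = m) :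
    Nat.card (Σ b, M b) = Nat.card B * m := by
  have key : ∀ b, Nonempty (M b ≃ Fin m) := by
    intro b
    have := Fintype.ofFinite (M b)
    exact ⟨Fintype.equivFinOfCardEq (by rw [← Nat.card_eq_fintype_card, hm])⟩
  calc Nat.card (Σ b, M b) = Nat.card (B × Fin m) := by
        exact Nat.card_congr ((Equiv.sigmaCongrRight fun b => (key b).some).trans
          (Equiv.sigmaEquivProd B (Fin m)))
    _ = Nat.card B * m := by simp [Nat.card_prod]

def sigmaSumEquiv {A B : Type*} (M : A ⊕ B → Type*) :
    (Σ s : A ⊕ B, M s) ≃ (Σ a : A, M (Sum.inl a)) ⊕ (Σ b : B, M (Sum.inr b)) where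
  toFun := fun x => match x with
    | ⟨Sum.inl a, m⟩ => Sum.inl ⟨a, m⟩
    | ⟨Sum.inr b, m⟩ => Sum.inr ⟨b, m⟩
  invFun := fun x => match x with
    | Sum.inl ⟨a, m⟩ => ⟨Sum.inl a, m⟩
    | Sum.inr ⟨b, m⟩ => ⟨Sum.inr b, m⟩
  left_inv := by rintro ⟨(a | b), m⟩ <;> rfl
  right_inv := by rintro (⟨a, m⟩ | ⟨b, m⟩) <;> rfl

lemma card_sigma_split {B : Type*} [Finite B] (R : B → Prop) {M : B → Type*}
    [∀ b, Finite (M b)] (m₁ m₂ : ℕ)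
    (h₁ : ∀ b, R b → Nat.card (M b) = m₁) (h₂ : ∀ b, ¬ R b → Nat.card (M b) = m₂) :
    Nat.card (Σ b, M b) =
      Nat.card {b : B // R b} * m₁ + Nat.card {b : B // ¬ R b} * m₂ := by
  classical
  have e : (Σ s : {b : B // R b} ⊕ {b : B // ¬ R b}, M (Equiv.sumCompl R s)) ≃ (Σ b, M b) :=
    Equiv.sigmaCongrLeft (β := M) (Equiv.sumCompl R)
  rw [← Nat.card_congr e, Nat.card_congr (sigmaSumEquiv _), Nat.card_sum]
  congr 1
  · exact card_sigma_const m₁ (fun b => h₁ b.1 b.2)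
  · exact card_sigma_const m₂ (fun b => h₂ b.1 b.2)

/-- sigma split of a subtype of a product along conditions on the two components -/
def subSigma {β₁ β₂ : Type*} (Ψ : β₂ → Prop) (Θ : β₁ → β₂ → Prop) :
    {p : β₁ × β₂ // Ψ p.2 ∧ Θ p.1 p.2} ≃ Σ b : {b : β₂ // Ψ b}, {a : β₁ // Θ a b.1} where
  toFun p := ⟨⟨p.1.2, p.2.1⟩, ⟨p.1.1, p.2.2⟩⟩
  invFun s := ⟨(s.2.1, s.1.1), s.1.2, s.2.2⟩
  left_inv p := rfl
  right_inv s := rfl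

/-! #### Counting injections with constraints -/

lemma card_inj_avoid (q a : ℕ) (Z : Finset (Fin q)) :
    Nat.card {f : Fin a → Fin q // Injective f ∧ ∀ j, f j ∉ Z}
      = (q - Z.card).descFactorial a := by
  classical
  have e : {f : Fin a → Fin q // Injective f ∧ ∀ j, f j ∉ Z} ≃
      (Fin a ↪ {y : Fin q // y ∉ Z}) :=
    { toFun := fun f => ⟨fun j => ⟨f.1 j, f.2.2 j⟩,
        fun j j' h => f.2.1 (congrArg Subtype.val h)⟩
      invFun := fun e => ⟨fun j => (e j).1,
        fun j j' h => e.injective (Subtype.ext h), fun j => (e j).2⟩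
      left_inv := fun f => rfl
      right_inv := fun e => by ext j; rfl }
  rw [Nat.card_congr e, Nat.card_eq_fintype_card, Fintype.card_embedding_eq,
    Fintype.card_fin]
  congr 1
  rw [Fintype.card_subtype_compl, Fintype.card_fin]
  congr 1
  simp [Fintype.card_subtype]

lemma descFactorial_split (m a : ℕ) (hm : 1 ≤ m) :
    m.descFactorial a = (m - 1).descFactorial a + a * (m - 1).descFactorial (a - 1) := by
  obtain ⟨m', rfl⟩ : ∃ m', m = m' + 1 := ⟨m - 1, by omega⟩
  cases a with
  | zero => simp
  | succ a' =>
    simp only [Nat.succ_descFactorial_succ, Nat.add_sub_cancel]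
    rcases le_or_gt a' m' with h | h
    · rw [Nat.descFactorial_succ]
      have : m' - a' + (a' + 1) = m' + 1 := by omega
      nlinarith [Nat.descFactorial_succ m' a']
    · rw [Nat.descFactorial_of_lt h, Nat.descFactorial_of_lt (by omega)]
      ring

lemma card_inj_avoid_mem (q a : ℕ) (Z : Finset (Fin q)) (x : Fin q) (hx : x ∉ Z) :
    Nat.card {f : Fin a → Fin q // Injective f ∧ (∀ j, f j ∉ Z) ∧ x ∈ Set.range f}
      = a * (q - Z.card - 1).descFactorial (a - 1) := by
  classical
  have hsplit : Nat.card {f : Fin a → Fin q // Injective f ∧ ∀ j, f j ∉ Z}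
      = Nat.card {f : Fin a → Fin q // (Injective f ∧ ∀ j, f j ∉ Z) ∧ x ∈ Set.range f}
        + Nat.card {f : Fin a → Fin q //
            (Injective f ∧ ∀ j, f j ∉ Z) ∧ ¬ x ∈ Set.range f} :=
    card_subtype_split (γ := Fin a → Fin q)
      (fun f => Injective f ∧ ∀ j, f j ∉ Z) (fun f => x ∈ Set.range f)
  have h1 : Nat.card {f : Fin a → Fin q //
      (Injective f ∧ ∀ j, f j ∉ Z) ∧ x ∈ Set.range f}
      = Nat.card {f : Fin a → Fin q // Injective f ∧ (∀ j, f j ∉ Z) ∧ x ∈ Set.range f} :=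
    Nat.card_congr (Equiv.subtypeEquiv (Equiv.refl _) (by tauto))
  have h2 : Nat.card {f : Fin a → Fin q //
      (Injective f ∧ ∀ j, f j ∉ Z) ∧ ¬ x ∈ Set.range f}
      = Nat.card {f : Fin a → Fin q // Injective f ∧ ∀ j, f j ∉ insert x Z} := by
    apply Nat.card_congr (Equiv.subtypeEquiv (Equiv.refl _) _)
    intro f
    simp only [Equiv.refl_apply, Finset.mem_insert, Set.mem_range]
    constructor
    · rintro ⟨⟨hi, hz⟩, hr⟩
      exact ⟨hi, fun j hj => hj.elim (fun h => hr ⟨j, h⟩) (hz j)⟩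
    · rintro ⟨hi, hz⟩
      exact ⟨⟨hi, fun j hj => hz j (Or.inr hj)⟩, fun ⟨j, hj⟩ => hz j (Or.inl hj)⟩
  have hlt : Z.card < q := by
    have hne : Z ≠ Finset.univ := by
      intro h
      rw [h] at hx
      exact hx (Finset.mem_univ x)
    have := Finset.card_lt_card (Finset.ssubset_univ_iff.mpr hne)
    simpa using this
  have hq : q - (Z.card + 1) = q - Z.card - 1 := Nat.sub_sub q Z.card 1 ▸ rfl
  rw [card_inj_avoid, h2, card_inj_avoid, Finset.card_insert_of_notMem hx, hq] at hsplit
  rw [← h1]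
  revert hsplit
  generalize Nat.card {f : Fin a → Fin q //
      (Injective f ∧ ∀ j, f j ∉ Z) ∧ x ∈ Set.range f} = C
  intro hsplit
  clear h1 h2 hx
  have hsp := descFactorial_split (q - Z.card) a (by omega)
  omega

lemma card_inj_avoid_mem_zero (q a : ℕ) (Z : Finset (Fin q)) (x : Fin q) (hx : x ∈ Z) :
    Nat.card {f : Fin a → Fin q // Injective f ∧ (∀ j, f j ∉ Z) ∧ x ∈ Set.range f} = 0 := by
  have : IsEmpty {f : Fin a → Fin q // Injective f ∧ (∀ j, f j ∉ Z) ∧ x ∈ Set.range f} := by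
    constructor
    rintro ⟨f, -, hZ, j, rfl⟩
    exact hZ j hx
  exact Nat.card_of_isEmpty

/-! #### Decomposition equivalences for clique-paths -/

def pvSingEquiv (a : ℕ) : PV [a] ≃ Fin a where
  toFun := fun x => match x with
    | ⟨⟨0, _⟩, v⟩ => v
  invFun := fun v => ⟨⟨0, Nat.one_pos⟩, v⟩
  left_inv := by
    rintro ⟨⟨_ | l, hl⟩, v⟩
    · rfl
    · exact absurd hl (by simp)
  right_inv := fun v => rfl

def pvConsEquiv (a : ℕ) (L : List ℕ) : PV (a :: L) ≃ (Fin a ⊕ PV L) where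
  toFun := fun x => match x with
    | ⟨⟨0, _⟩, v⟩ => Sum.inl v
    | ⟨⟨l + 1, h⟩, v⟩ => Sum.inr ⟨⟨l, Nat.succ_lt_succ_iff.mp h⟩, v⟩
  invFun := Sum.elim (fun v => ⟨⟨0, Nat.succ_pos _⟩, v⟩) (fun lv => ⟨lv.1.succ, lv.2⟩)
  left_inv := by rintro ⟨⟨_ | l, hl⟩, v⟩ <;> rfl
  right_inv := by rintro (v | ⟨⟨l, hl⟩, v⟩) <;> rfl

variable {q k : ℕ} {Y : Finset (Fin q)} {x : Fin q}

lemma firstMem_iff {L : List ℕ} (f : PV L → Fin q) (l0 : Fin L.length) (hl0 : (l0 : ℕ) = 0) :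
    FirstMem q x L f ↔ x ∈ Finset.image (fun w => f ⟨l0, w⟩) Finset.univ := by
  constructor
  · rintro ⟨⟨l, v⟩, h0, rfl⟩
    have h0' : (l : ℕ) = 0 := h0
    have hll : l = l0 := Fin.ext (by rw [h0', hl0])
    subst hll
    exact Finset.mem_image.mpr ⟨v, Finset.mem_univ v, rfl⟩
  · intro h
    obtain ⟨w, -, hw⟩ := Finset.mem_image.mp h
    exact ⟨⟨l0, w⟩, hl0, hw⟩

section Sing

variable (a : ℕ) (f : PV [a] → Fin q)

lemma pprop_sing_iff :
    PProp q Y [a] f ↔ (Injective (fun v : Fin a => f ⟨⟨0, Nat.one_pos⟩, v⟩) ∧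
      ∀ v : Fin a, f ⟨⟨0, Nat.one_pos⟩, v⟩ ∉ Y) := by
  constructor
  · rintro ⟨h1, -, h3⟩
    constructor
    · intro v v' hvv
      by_contra hne
      exact h1 ⟨0, Nat.one_pos⟩ v v' hne hvv
    · intro v
      exact h3 ⟨0, Nat.one_pos⟩ v rfl
  · rintro ⟨hinj, havd⟩
    refine ⟨?_, ?_, ?_⟩
    · rintro ⟨l, hl⟩ v v' hne
      have hl1 : l < 1 := by simpa using hl
      have : l = 0 := by omega
      subst this
      exact fun h => hne (hinj h)
    · rintro ⟨l, hl⟩ ⟨l', hl'⟩ v v' hll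
      have hl1 : l < 1 := by simpa using hl
      have hl1' : l' < 1 := by simpa using hl'
      have hll' : l + 1 = l' := hll
      omega
    · rintro ⟨l, hl⟩ v hlen
      have hl1 : l < 1 := by simpa using hl
      have : l = 0 := by omega
      subst this
      exact havd v

lemma firstMem_sing_iff :
    FirstMem q x [a] f ↔ x ∈ Set.range (fun v : Fin a => f ⟨⟨0, Nat.one_pos⟩, v⟩) := by
  constructor
  · rintro ⟨⟨⟨l, hl⟩, v⟩, h0, rfl⟩
    have h0' : l = 0 := h0
    subst h0'
    exact ⟨v, rfl⟩
  · rintro ⟨v, hv⟩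
    exact ⟨⟨⟨0, Nat.one_pos⟩, v⟩, rfl, hv⟩

end Sing

section Cons

variable {a : ℕ} {L : List ℕ}

/-- first index of a nonempty list -/
def fidx (hL : L ≠ []) : Fin L.length := ⟨0, List.length_pos_iff.mpr hL⟩

variable (hL : L ≠ []) (f : PV (a :: L) → Fin q)

/-- restriction of a colouring to the first clique -/
def cfst (f : PV (a :: L) → Fin q) : Fin a → Fin q := fun v => f ⟨⟨0, Nat.succ_pos _⟩, v⟩

/-- restriction of a colouring to the remaining cliques -/
def crest (f : PV (a :: L) → Fin q) : PV L → Fin q := fun lv => f ⟨lv.1.succ, lv.2⟩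

lemma pprop_cons_iff :
    PProp q Y (a :: L) f ↔ PProp q Y L (crest f) ∧
      (Injective (cfst f) ∧
        ∀ (v : Fin a) (w : Fin (L.get (fidx hL))), cfst f v ≠ crest f ⟨fidx hL, w⟩) := by
  have hlen : 0 < L.length := List.length_pos_iff.mpr hL
  constructor
  · rintro ⟨h1, h2, h3⟩
    refine ⟨⟨?_, ?_, ?_⟩, ?_, ?_⟩
    · rintro ⟨l, hl⟩ v v' hne
      exact h1 ⟨l + 1, Nat.succ_lt_succ hl⟩ v v' hne
    · rintro ⟨l, hl⟩ ⟨l', hl'⟩ v v' hll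
      have hll' : (l : ℕ) + 1 = (l' : ℕ) := hll
      exact h2 ⟨l + 1, Nat.succ_lt_succ hl⟩ ⟨l' + 1, Nat.succ_lt_succ hl'⟩ v v'
        (by simp; omega)
    · rintro ⟨l, hl⟩ v hlast
      have hlast' : l + 1 = L.length := hlast
      exact h3 ⟨l + 1, Nat.succ_lt_succ hl⟩ v (by simp; omega)
    · intro v v' hvv
      by_contra hne
      exact h1 ⟨0, Nat.succ_pos _⟩ v v' hne hvv
    · intro v w
      exact h2 ⟨0, Nat.succ_pos _⟩ ⟨1, Nat.succ_lt_succ hlen⟩ v w rfl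
  · rintro ⟨⟨r1, r2, r3⟩, hinj, hint⟩
    refine ⟨?_, ?_, ?_⟩
    · rintro ⟨_ | l, hl⟩ v v' hne
      · exact fun h => hne (hinj h)
      · exact r1 ⟨l, Nat.succ_lt_succ_iff.mp hl⟩ v v' hne
    · rintro ⟨_ | l, hl⟩ ⟨_ | l', hl'⟩ v v' hll
      · exact absurd hll (by simp)
      · have hll' : (0 : ℕ) + 1 = l' + 1 := hll
        have : l' = 0 := by omega
        subst this
        exact hint v v'
      · exact absurd hll (by simp)
      · have hll' : (l : ℕ) + 1 + 1 = l' + 1 := hll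
        have hlc : l + 1 < L.length + 1 := by simpa using hl
        have hlc' : l' + 1 < L.length + 1 := by simpa using hl'
        exact r2 ⟨l, by omega⟩ ⟨l', by omega⟩ v v' (by simp; omega)
    · rintro ⟨_ | l, hl⟩ v hlast
      · have hlast' : (0 : ℕ) + 1 = L.length + 1 := by simpa using hlast
        omega
      · have hlast' : (l : ℕ) + 1 + 1 = L.length + 1 := by simpa using hlast
        have hlc : l + 1 < L.length + 1 := by simpa using hl
        exact r3 ⟨l, by omega⟩ v (by simp; omega)

lemma firstMem_cons_iff :
    FirstMem q x (a :: L) f ↔ x ∈ Set.range (cfst f) := by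
  constructor
  · rintro ⟨⟨⟨_ | l, hl⟩, v⟩, h0, rfl⟩
    · exact ⟨v, rfl⟩
    · exact absurd h0 (by simp)
  · rintro ⟨v, hv⟩
    exact ⟨⟨⟨0, Nat.succ_pos _⟩, v⟩, rfl, hv⟩

end Cons

/-! #### Gluing colourings -/

section Glue

variable {q a : ℕ} {L : List ℕ}

def glue (f₁ : Fin a → Fin q) (fr : PV L → Fin q) : PV (a :: L) → Fin q
  | ⟨⟨0, _⟩, v⟩ => f₁ v
  | ⟨⟨l + 1, hl⟩, v⟩ => fr ⟨⟨l, Nat.succ_lt_succ_iff.mp hl⟩, v⟩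

lemma cfst_glue (f₁ : Fin a → Fin q) (fr : PV L → Fin q) : cfst (glue f₁ fr) = f₁ := rfl

lemma crest_glue (f₁ : Fin a → Fin q) (fr : PV L → Fin q) : crest (glue f₁ fr) = fr := rfl

/-- splitting a subtype of colourings of `a :: L` into a sigma type -/
def consSplit (Φ : (PV (a :: L) → Fin q) → Prop) (Ψ : (PV L → Fin q) → Prop)
    (Θ : (Fin a → Fin q) → (PV L → Fin q) → Prop)
    (hΦ : ∀ f, Φ f ↔ Ψ (crest f) ∧ Θ (cfst f) (crest f)) :
    {f : PV (a :: L) → Fin q // Φ f} ≃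
      Σ fr : {fr : PV L → Fin q // Ψ fr}, {f₁ : Fin a → Fin q // Θ f₁ fr.1} where
  toFun f := ⟨⟨crest f.1, ((hΦ f.1).mp f.2).1⟩, ⟨cfst f.1, ((hΦ f.1).mp f.2).2⟩⟩
  invFun s := ⟨glue s.2.1 s.1.1, (hΦ _).mpr ⟨s.1.2, s.2.2⟩⟩
  left_inv := by
    rintro ⟨f, hf⟩
    apply Subtype.ext
    funext lv
    rcases lv with ⟨⟨_ | l, hl⟩, v⟩ <;> rfl
  right_inv := by
    rintro ⟨⟨fr, hfr⟩, ⟨f₁, hf₁⟩⟩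
    rfl

/-- splitting a subtype of colourings of the single-clique path `[a]` -/
def singSplit (Φ : (PV [a] → Fin q) → Prop) (Θ : (Fin a → Fin q) → Prop)
    (hΦ : ∀ f, Φ f ↔ Θ (cfst f)) :
    {f : PV [a] → Fin q // Φ f} ≃ {f₁ : Fin a → Fin q // Θ f₁} where
  toFun f := ⟨cfst f.1, (hΦ f.1).mp f.2⟩
  invFun g := ⟨glue g.1 (fun lv => lv.1.elim0), (hΦ _).mpr g.2⟩
  left_inv := by
    rintro ⟨f, hf⟩
    apply Subtype.ext
    funext lv
    rcases lv with ⟨⟨_ | l, hl⟩, v⟩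
    · rfl
    · exact absurd hl (by simp)
  right_inv := by rintro ⟨g, hg⟩; rfl

end Glue


section ZImg

variable {q k : ℕ} {Y : Finset (Fin q)} {x : Fin q} {L : List ℕ}

/-- colours used by the first clique -/
def ZImg (hL : L ≠ []) (fr : PV L → Fin q) : Finset (Fin q) :=
  Finset.image (fun w => fr ⟨fidx hL, w⟩) Finset.univ

lemma ZImg_card (hL : L ≠ []) (fr : PV L → Fin q) (h : PProp q Y L fr) :
    (ZImg hL fr).card = L.get (fidx hL) := by
  have hinj : Injective (fun w => fr ⟨fidx hL, w⟩) := by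
    intro w w' hw
    by_contra hne
    exact h.1 (fidx hL) w w' hne hw
  rw [ZImg, Finset.card_image_of_injective _ hinj, Finset.card_univ, Fintype.card_fin]

lemma mem_ZImg_iff (hL : L ≠ []) (fr : PV L → Fin q) :
    x ∈ ZImg hL fr ↔ FirstMem q x L fr :=
  (firstMem_iff fr (fidx hL) rfl).symm

lemma avoid_ZImg_iff (hL : L ≠ []) (fr : PV L → Fin q) {a : ℕ} (f₁ : Fin a → Fin q) :
    (∀ (v : Fin a) (w : Fin (L.get (fidx hL))), f₁ v ≠ fr ⟨fidx hL, w⟩) ↔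
      ∀ j, f₁ j ∉ ZImg hL fr := by
  constructor
  · intro h j hj
    obtain ⟨w, -, hw⟩ := Finset.mem_image.mp hj
    exact h j w hw.symm
  · intro h v w heq
    exact h v (Finset.mem_image.mpr ⟨w, Finset.mem_univ w, heq.symm⟩)

end ZImg

/-! #### The path-counting theorem -/

theorem count_path {q k : ℕ} {Y : Finset (Fin q)} {x : Fin q} {b : Bool}
    (hY : Y.card = k) (hb : x ∈ Y ↔ b = true) :
    ∀ L : List ℕ, L ≠ [] →
      Nat.card {f : PV L → Fin q // PProp q Y L f ∧ ¬ FirstMem q x L f} = (pgh q k b L).1 ∧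
      Nat.card {f : PV L → Fin q // PProp q Y L f ∧ FirstMem q x L f} = (pgh q k b L).2 := by
  classical
  intro L
  induction L with
  | nil => exact fun h => absurd rfl h
  | cons a rest ih =>
    intro _
    rcases eq_or_ne rest [] with rfl | hrest
    · -- base case: the single clique `[a]`
      have hg : Nat.card {f : PV [a] → Fin q //
            PProp q Y [a] f ∧ ¬ FirstMem q x [a] f}
          = (q - (insert x Y).card).descFactorial a := by
        rw [Nat.card_congr (singSplit _
          (fun f₁ => Injective f₁ ∧ ∀ j, f₁ j ∉ insert x Y) (fun f => ?_)),
          card_inj_avoid]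
        rw [pprop_sing_iff, firstMem_sing_iff]
        show (Injective (cfst f) ∧ ∀ v, cfst f v ∉ Y) ∧ ¬ x ∈ Set.range (cfst f) ↔ _
        simp only [Set.mem_range, not_exists, Finset.mem_insert, not_or]
        constructor
        · rintro ⟨⟨h1, h2⟩, h3⟩
          exact ⟨h1, fun v => ⟨fun hv => h3 v hv, h2 v⟩⟩
        · rintro ⟨h1, h2⟩
          exact ⟨⟨h1, fun v => (h2 v).2⟩, fun v hv => (h2 v).1 hv⟩
      have hh : Nat.card {f : PV [a] → Fin q //
            PProp q Y [a] f ∧ FirstMem q x [a] f}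
          = Nat.card {f₁ : Fin a → Fin q //
              Injective f₁ ∧ (∀ j, f₁ j ∉ Y) ∧ x ∈ Set.range f₁} := by
        apply Nat.card_congr (singSplit _ _ (fun f => ?_))
        rw [pprop_sing_iff, firstMem_sing_iff]
        show (Injective (cfst f) ∧ ∀ v, cfst f v ∉ Y) ∧ x ∈ Set.range (cfst f) ↔ _
        tauto
      cases b with
      | true =>
        have hxY : x ∈ Y := hb.mpr rfl
        rw [Finset.insert_eq_self.mpr hxY, hY] at hg
        rw [hh, card_inj_avoid_mem_zero q a Y x hxY]
        constructor
        · rw [hg]; simp [pgh, nsz]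
        · simp [pgh, nsz]
      | false =>
        have hxY : x ∉ Y := fun h => by simpa using hb.mp h
        rw [Finset.card_insert_of_notMem hxY, hY] at hg
        rw [hh, card_inj_avoid_mem q a Y x hxY, hY]
        constructor
        · rw [hg]
          simp [pgh, nsz, Nat.sub_sub]
        · simp [pgh, nsz]
    · -- inductive step
      obtain ⟨ihg, ihh⟩ := ih hrest
      have hnsz : nsz k rest = rest.get (fidx hrest) := by
        cases rest
        · exact absurd rfl hrest
        · rfl
      constructor
      · -- the `g` count
        have eg := consSplit
          (fun f => PProp q Y (a :: rest) f ∧ ¬ FirstMem q x (a :: rest) f)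
          (fun fr => PProp q Y rest fr)
          (fun f₁ fr => (Injective f₁ ∧ ∀ (v : Fin a) (w : Fin (rest.get (fidx hrest))),
              f₁ v ≠ fr ⟨fidx hrest, w⟩) ∧ ¬ x ∈ Set.range f₁)
          (fun f => by
            show (PProp q Y (a :: rest) f ∧ ¬ FirstMem q x (a :: rest) f) ↔
              PProp q Y rest (crest f) ∧
                ((Injective (cfst f) ∧ ∀ (v : Fin a) (w : Fin (rest.get (fidx hrest))),
                  cfst f v ≠ crest f ⟨fidx hrest, w⟩) ∧ ¬ x ∈ Set.range (cfst f))
            rw [pprop_cons_iff hrest, firstMem_cons_iff]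
            tauto)
        rw [Nat.card_congr eg,
          card_sigma_split (fun frs => x ∈ ZImg hrest frs.1)
            ((q - nsz k rest).descFactorial a) ((q - nsz k rest - 1).descFactorial a)
            ?_ ?_]
        · have c1 : Nat.card {frs : {fr : PV rest → Fin q // PProp q Y rest fr} //
              x ∈ ZImg hrest frs.1} = (pgh q k b rest).2 := by
            rw [← ihh]
            apply Nat.card_congr
            refine (Equiv.subtypeSubtypeEquivSubtypeInter
              (fun fr : PV rest → Fin q => PProp q Y rest fr)
              (fun fr => x ∈ ZImg hrest fr)).trans
              (Equiv.subtypeEquiv (Equiv.refl _) fun fr => ?_)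
            simp only [Equiv.refl_apply]
            exact and_congr_right fun _ => mem_ZImg_iff hrest fr
          have c2 : Nat.card {frs : {fr : PV rest → Fin q // PProp q Y rest fr} //
              ¬ x ∈ ZImg hrest frs.1} = (pgh q k b rest).1 := by
            rw [← ihg]
            apply Nat.card_congr
            refine (Equiv.subtypeSubtypeEquivSubtypeInter
              (fun fr : PV rest → Fin q => PProp q Y rest fr)
              (fun fr => ¬ x ∈ ZImg hrest fr)).trans
              (Equiv.subtypeEquiv (Equiv.refl _) fun fr => ?_)
            simp only [Equiv.refl_apply]
            exact and_congr_right fun _ => not_congr (mem_ZImg_iff hrest fr)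
          rw [c1, c2]
          show _ = (pgh q k b (a :: rest)).1
          simp only [pgh]
          ring
        · -- fibre over a base point whose first clique uses `x`
          rintro ⟨fr, hfr⟩ hmem
          have eiff : ∀ f₁ : Fin a → Fin q,
              ((Injective f₁ ∧ ∀ (v : Fin a) (w : Fin (rest.get (fidx hrest))),
                f₁ v ≠ fr ⟨fidx hrest, w⟩) ∧ ¬ x ∈ Set.range f₁) ↔
              (Injective f₁ ∧ ∀ j, f₁ j ∉ ZImg hrest fr) := by
            intro f₁
            rw [and_assoc, and_congr_right_iff]
            intro hinj
            rw [avoid_ZImg_iff hrest fr f₁]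
            constructor
            · exact fun h => h.1
            · intro h
              refine ⟨h, ?_⟩
              rintro ⟨v, hv⟩
              exact h v (hv ▸ hmem)
          show Nat.card {f₁ : Fin a → Fin q //
              (Injective f₁ ∧ ∀ (v : Fin a) (w : Fin (rest.get (fidx hrest))),
                f₁ v ≠ fr ⟨fidx hrest, w⟩) ∧ ¬ x ∈ Set.range f₁} = _
          have e2 : {f₁ : Fin a → Fin q //
              (Injective f₁ ∧ ∀ (v : Fin a) (w : Fin (rest.get (fidx hrest))),
                f₁ v ≠ fr ⟨fidx hrest, w⟩) ∧ ¬ x ∈ Set.range f₁} ≃ {f₁ : Fin a → Fin q //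
              Injective f₁ ∧ ∀ j, f₁ j ∉ ZImg hrest fr} :=
            Equiv.subtypeEquiv (Equiv.refl _) eiff
          rw [Nat.card_congr e2, card_inj_avoid,
            ZImg_card hrest fr hfr, hnsz]
        · -- fibre over a base point whose first clique avoids `x`
          rintro ⟨fr, hfr⟩ hmem
          have eiff : ∀ f₁ : Fin a → Fin q,
              ((Injective f₁ ∧ ∀ (v : Fin a) (w : Fin (rest.get (fidx hrest))),
                f₁ v ≠ fr ⟨fidx hrest, w⟩) ∧ ¬ x ∈ Set.range f₁) ↔
              (Injective f₁ ∧ ∀ j, f₁ j ∉ insert x (ZImg hrest fr)) := by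
            intro f₁
            rw [and_assoc, and_congr_right_iff]
            intro hinj
            rw [avoid_ZImg_iff hrest fr f₁]
            simp only [Set.mem_range, not_exists, Finset.mem_insert, not_or]
            constructor
            · rintro ⟨h1, h2⟩ v
              exact ⟨fun hv => h2 v hv, h1 v⟩
            · intro h
              exact ⟨fun v => (h v).2, fun v hv => (h v).1 hv⟩
          show Nat.card {f₁ : Fin a → Fin q //
              (Injective f₁ ∧ ∀ (v : Fin a) (w : Fin (rest.get (fidx hrest))),
                f₁ v ≠ fr ⟨fidx hrest, w⟩) ∧ ¬ x ∈ Set.range f₁} = _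
          have e2 : {f₁ : Fin a → Fin q //
              (Injective f₁ ∧ ∀ (v : Fin a) (w : Fin (rest.get (fidx hrest))),
                f₁ v ≠ fr ⟨fidx hrest, w⟩) ∧ ¬ x ∈ Set.range f₁} ≃ {f₁ : Fin a → Fin q //
              Injective f₁ ∧ ∀ j, f₁ j ∉ insert x (ZImg hrest fr)} :=
            Equiv.subtypeEquiv (Equiv.refl _) eiff
          rw [Nat.card_congr e2, card_inj_avoid,
            Finset.card_insert_of_notMem hmem, ZImg_card hrest fr hfr, hnsz]
          rw [Nat.sub_sub]
      · -- the `h` count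
        have eh := consSplit
          (fun f => PProp q Y (a :: rest) f ∧ FirstMem q x (a :: rest) f)
          (fun fr => PProp q Y rest fr)
          (fun f₁ fr => (Injective f₁ ∧ ∀ (v : Fin a) (w : Fin (rest.get (fidx hrest))),
              f₁ v ≠ fr ⟨fidx hrest, w⟩) ∧ x ∈ Set.range f₁)
          (fun f => by
            show (PProp q Y (a :: rest) f ∧ FirstMem q x (a :: rest) f) ↔
              PProp q Y rest (crest f) ∧
                ((Injective (cfst f) ∧ ∀ (v : Fin a) (w : Fin (rest.get (fidx hrest))),
                  cfst f v ≠ crest f ⟨fidx hrest, w⟩) ∧ x ∈ Set.range (cfst f))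
            rw [pprop_cons_iff hrest, firstMem_cons_iff]
            tauto)
        rw [Nat.card_congr eh,
          card_sigma_split (fun frs => x ∈ ZImg hrest frs.1)
            0 (a * (q - nsz k rest - 1).descFactorial (a - 1)) ?_ ?_]
        · have c1 : Nat.card {frs : {fr : PV rest → Fin q // PProp q Y rest fr} //
              x ∈ ZImg hrest frs.1} = (pgh q k b rest).2 := by
            rw [← ihh]
            apply Nat.card_congr
            refine (Equiv.subtypeSubtypeEquivSubtypeInter
              (fun fr : PV rest → Fin q => PProp q Y rest fr)
              (fun fr => x ∈ ZImg hrest fr)).trans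
              (Equiv.subtypeEquiv (Equiv.refl _) fun fr => ?_)
            simp only [Equiv.refl_apply]
            exact and_congr_right fun _ => mem_ZImg_iff hrest fr
          have c2 : Nat.card {frs : {fr : PV rest → Fin q // PProp q Y rest fr} //
              ¬ x ∈ ZImg hrest frs.1} = (pgh q k b rest).1 := by
            rw [← ihg]
            apply Nat.card_congr
            refine (Equiv.subtypeSubtypeEquivSubtypeInter
              (fun fr : PV rest → Fin q => PProp q Y rest fr)
              (fun fr => ¬ x ∈ ZImg hrest fr)).trans
              (Equiv.subtypeEquiv (Equiv.refl _) fun fr => ?_)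
            simp only [Equiv.refl_apply]
            exact and_congr_right fun _ => not_congr (mem_ZImg_iff hrest fr)
          rw [c1, c2]
          show _ = (pgh q k b (a :: rest)).2
          simp only [pgh]
          ring
        · rintro ⟨fr, hfr⟩ hmem
          have eiff : ∀ f₁ : Fin a → Fin q,
              ((Injective f₁ ∧ ∀ (v : Fin a) (w : Fin (rest.get (fidx hrest))),
                f₁ v ≠ fr ⟨fidx hrest, w⟩) ∧ x ∈ Set.range f₁) ↔
              (Injective f₁ ∧ (∀ j, f₁ j ∉ ZImg hrest fr) ∧ x ∈ Set.range f₁) := by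
            intro f₁
            rw [and_assoc, and_congr_right_iff]
            intro hinj
            rw [avoid_ZImg_iff hrest fr f₁]
          show Nat.card {f₁ : Fin a → Fin q //
              (Injective f₁ ∧ ∀ (v : Fin a) (w : Fin (rest.get (fidx hrest))),
                f₁ v ≠ fr ⟨fidx hrest, w⟩) ∧ x ∈ Set.range f₁} = _
          have e2 : {f₁ : Fin a → Fin q //
              (Injective f₁ ∧ ∀ (v : Fin a) (w : Fin (rest.get (fidx hrest))),
                f₁ v ≠ fr ⟨fidx hrest, w⟩) ∧ x ∈ Set.range f₁} ≃ {f₁ : Fin a → Fin q //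
              Injective f₁ ∧ (∀ j, f₁ j ∉ ZImg hrest fr) ∧ x ∈ Set.range f₁} :=
            Equiv.subtypeEquiv (Equiv.refl _) eiff
          rw [Nat.card_congr e2,
            card_inj_avoid_mem_zero q a _ x hmem]
        · rintro ⟨fr, hfr⟩ hmem
          have eiff : ∀ f₁ : Fin a → Fin q,
              ((Injective f₁ ∧ ∀ (v : Fin a) (w : Fin (rest.get (fidx hrest))),
                f₁ v ≠ fr ⟨fidx hrest, w⟩) ∧ x ∈ Set.range f₁) ↔
              (Injective f₁ ∧ (∀ j, f₁ j ∉ ZImg hrest fr) ∧ x ∈ Set.range f₁) := by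
            intro f₁
            rw [and_assoc, and_congr_right_iff]
            intro hinj
            rw [avoid_ZImg_iff hrest fr f₁]
          show Nat.card {f₁ : Fin a → Fin q //
              (Injective f₁ ∧ ∀ (v : Fin a) (w : Fin (rest.get (fidx hrest))),
                f₁ v ≠ fr ⟨fidx hrest, w⟩) ∧ x ∈ Set.range f₁} = _
          have e2 : {f₁ : Fin a → Fin q //
              (Injective f₁ ∧ ∀ (v : Fin a) (w : Fin (rest.get (fidx hrest))),
                f₁ v ≠ fr ⟨fidx hrest, w⟩) ∧ x ∈ Set.range f₁} ≃ {f₁ : Fin a → Fin q //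
              Injective f₁ ∧ (∀ j, f₁ j ∉ ZImg hrest fr) ∧ x ∈ Set.range f₁} :=
            Equiv.subtypeEquiv (Equiv.refl _) eiff
          rw [Nat.card_congr e2,
            card_inj_avoid_mem q a _ x hmem, ZImg_card hrest fr hfr, hnsz]

/-! #### Counting colourings of the clique-theta graph -/

section Theta

variable {n : ℕ} (S : Fin n → List ℕ) (k q : ℕ)

/-- the chromatic counting function of `T(1, S, k)` -/
def thetaCount : ℕ :=
  q * ((q - 1).descFactorial k * ∏ i, (pgh q k false (S i)).1
    + k * (q - 1).descFactorial (k - 1) * ∏ i, (pgh q k true (S i)).1)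

def colEquivSub : ((cliqueThetaGraph 1 S k).Coloring (Fin q)) ≃
    {c : CliqueThetaVertex 1 S k → Fin q //
      ∀ u v, (cliqueThetaGraph 1 S k).Adj u v → c u ≠ c v} where
  toFun C := ⟨C, fun u v h => C.valid h⟩
  invFun c := SimpleGraph.Coloring.mk c.1 (fun {u v} h => c.2 u v h)
  left_inv := fun C => rfl
  right_inv := fun c => rfl

def decompE : (CliqueThetaVertex 1 S k → Fin q) ≃
    (Fin q × (∀ i, PV (S i) → Fin q) × (Fin k → Fin q)) where
  toFun c := (c (Sum.inl 0), fun i lv => c (Sum.inr (Sum.inl ⟨i, lv⟩)),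
    fun t => c (Sum.inr (Sum.inr t)))
  invFun d := fun v => match v with
    | Sum.inl _ => d.1
    | Sum.inr (Sum.inl ⟨i, lv⟩) => d.2.1 i lv
    | Sum.inr (Sum.inr t) => d.2.2 t
  left_inv := fun c => funext fun v => by
    rcases v with z | (⟨i, lv⟩ | t)
    · have hz : z = 0 := Subsingleton.elim z 0
      subst hz; rfl
    · rfl
    · rfl
  right_inv := fun d => rfl

lemma proper_iff (hS : ∀ i, S i ≠ []) (c : CliqueThetaVertex 1 S k → Fin q) :
    (∀ u v, (cliqueThetaGraph 1 S k).Adj u v → c u ≠ c v) ↔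
      (Injective (fun t => c (Sum.inr (Sum.inr t))) ∧
        ∀ i, PProp q (Finset.image (fun t : Fin k => c (Sum.inr (Sum.inr t))) Finset.univ)
              (S i) (fun lv => c (Sum.inr (Sum.inl ⟨i, lv⟩)))
          ∧ ¬ FirstMem q (c (Sum.inl 0)) (S i) (fun lv => c (Sum.inr (Sum.inl ⟨i, lv⟩)))) := by
  constructor
  · intro h
    refine ⟨?_, fun i => ⟨⟨?_, ?_, ?_⟩, ?_⟩⟩
    · intro t t' ht
      by_contra hne
      exact h (Sum.inr (Sum.inr t)) (Sum.inr (Sum.inr t'))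
        ⟨by simp [hne], Or.inl trivial⟩ ht
    · intro l v v' hne
      exact h (Sum.inr (Sum.inl ⟨i, ⟨l, v⟩⟩)) (Sum.inr (Sum.inl ⟨i, ⟨l, v'⟩⟩))
        ⟨by simp [hne], Or.inl ⟨rfl, Or.inl rfl⟩⟩
    · intro l l' v v' hll
      refine h (Sum.inr (Sum.inl ⟨i, ⟨l, v⟩⟩)) (Sum.inr (Sum.inl ⟨i, ⟨l', v'⟩⟩))
        ⟨?_, Or.inl ⟨rfl, Or.inr hll⟩⟩
      intro heq
      injection heq with heq1
      injection heq1 with heq2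
      injection heq2 with hi hrest
      injection hrest with hl hv
      have := congrArg Fin.val hl
      omega
    · intro l v hlast hmem
      obtain ⟨t, -, ht⟩ := Finset.mem_image.mp hmem
      exact h (Sum.inr (Sum.inl ⟨i, ⟨l, v⟩⟩)) (Sum.inr (Sum.inr t))
        ⟨by simp, Or.inl hlast⟩ ht.symm
    · rintro ⟨⟨l, v⟩, h0, heq⟩
      exact h (Sum.inl 0) (Sum.inr (Sum.inl ⟨i, ⟨l, v⟩⟩)) ⟨by simp, Or.inl h0⟩ heq.symm
  · rintro ⟨hw, hP⟩
    have Hrel : ∀ u v, cliqueThetaRel 1 S k u v → u ≠ v → c u ≠ c v := by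
      rintro (z | (⟨i, ⟨l, v⟩⟩ | t)) (z' | (⟨i', ⟨l', v'⟩⟩ | t')) hrel hne
      · exact absurd (by rw [Subsingleton.elim z z']) hne
      · have h0 : (l' : ℕ) = 0 := hrel
        have hz : z = 0 := Subsingleton.elim z 0
        subst hz
        intro heq
        exact (hP i').2 ⟨⟨l', v'⟩, h0, heq.symm⟩
      · exact hrel.elim
      · exact hrel.elim
      · obtain ⟨hii, hrel2⟩ := hrel
        have hii' : i = i' := Fin.ext hii
        subst hii'
        rcases hrel2 with hEq | hSucc
        · have hll : l = l' := Fin.ext hEq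
          subst hll
          have hvv : v ≠ v' := by
            intro hv
            subst hv
            exact hne rfl
          exact (hP i).1.1 l v v' hvv
        · exact (hP i).1.2.1 l l' v v' hSucc
      · have hlast : (l : ℕ) + 1 = (S i).length := hrel
        intro heq
        exact (hP i).1.2.2 l v hlast
          (Finset.mem_image.mpr ⟨t', Finset.mem_univ t', heq.symm⟩)
      · exact hrel.elim
      · exact hrel.elim
      · have htt : t ≠ t' := by
          intro h
          subst h
          exact hne rfl
        exact fun h => htt (hw h)
    rintro u v ⟨hne, h | h⟩
    · exact Hrel u v h hne
    · exact (Hrel v u h hne.symm).symm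

def toD : {d : Fin q × (∀ i, PV (S i) → Fin q) × (Fin k → Fin q) //
      Injective d.2.2 ∧ ∀ i, PProp q (Finset.image d.2.2 Finset.univ) (S i) (d.2.1 i) ∧
        ¬ FirstMem q d.1 (S i) (d.2.1 i)} ≃
    Σ _x : Fin q, Σ ws : {w : Fin k → Fin q // Injective w},
      ∀ i, {f : PV (S i) → Fin q //
        PProp q (Finset.image ws.1 Finset.univ) (S i) f ∧ ¬ FirstMem q _x (S i) f} where
  toFun d := ⟨d.1.1, ⟨d.1.2.2, d.2.1⟩, fun i => ⟨d.1.2.1 i, d.2.2 i⟩⟩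
  invFun s := ⟨⟨s.1, fun i => (s.2.2 i).1, s.2.1.1⟩, s.2.1.2, fun i => (s.2.2 i).2⟩
  left_inv d := rfl
  right_inv s := rfl

theorem count_theta (hS : ∀ i, S i ≠ []) :
    Nat.card ((cliqueThetaGraph 1 S k).Coloring (Fin q)) = thetaCount S k q := by
  classical
  rw [Nat.card_congr (colEquivSub S k q)]
  have E1 : {c : CliqueThetaVertex 1 S k → Fin q //
        ∀ u v, (cliqueThetaGraph 1 S k).Adj u v → c u ≠ c v} ≃
      {d : Fin q × (∀ i, PV (S i) → Fin q) × (Fin k → Fin q) //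
        Injective d.2.2 ∧ ∀ i, PProp q (Finset.image d.2.2 Finset.univ) (S i) (d.2.1 i) ∧
          ¬ FirstMem q d.1 (S i) (d.2.1 i)} :=
    Equiv.subtypeEquiv (decompE S k q) (fun c => proper_iff S k q hS c)
  rw [Nat.card_congr E1, Nat.card_congr (toD S k q)]
  rw [card_sigma_const ((q - 1).descFactorial k * ∏ i, (pgh q k false (S i)).1
    + k * (q - 1).descFactorial (k - 1) * ∏ i, (pgh q k true (S i)).1) ?_]
  · rw [Nat.card_eq_fintype_card, Fintype.card_fin, thetaCount]
  intro x
  rw [card_sigma_split (fun ws => x ∈ Finset.image ws.1 Finset.univ)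
    (∏ i, (pgh q k true (S i)).1) (∏ i, (pgh q k false (S i)).1) ?_ ?_]
  · -- cardinalities of the two classes of boundary colourings
    have hc1 : Nat.card {ws : {w : Fin k → Fin q // Injective w} //
        x ∈ Finset.image ws.1 Finset.univ} = k * (q - 1).descFactorial (k - 1) := by
      have e : {ws : {w : Fin k → Fin q // Injective w} //
          x ∈ Finset.image ws.1 Finset.univ} ≃
        {w : Fin k → Fin q // Injective w ∧ (∀ j, w j ∉ (∅ : Finset (Fin q)))
            ∧ x ∈ Set.range w} :=
        (Equiv.subtypeSubtypeEquivSubtypeInter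
          (fun w : Fin k → Fin q => Injective w)
          (fun w => x ∈ Finset.image w Finset.univ)).trans
        (Equiv.subtypeEquiv (Equiv.refl _) (fun w => by
          simp only [Equiv.refl_apply, Finset.mem_image, Finset.mem_univ, true_and,
            Finset.notMem_empty, not_false_iff, Set.mem_range]
          tauto))
      rw [Nat.card_congr e, card_inj_avoid_mem q k ∅ x (Finset.notMem_empty x)]
      simp
    have hc2 : Nat.card {ws : {w : Fin k → Fin q // Injective w} //
        ¬ x ∈ Finset.image ws.1 Finset.univ} = (q - 1).descFactorial k := by
      have e : {ws : {w : Fin k → Fin q // Injective w} //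
          ¬ x ∈ Finset.image ws.1 Finset.univ} ≃
        {w : Fin k → Fin q // Injective w ∧ ∀ j, w j ∉ ({x} : Finset (Fin q))} :=
        (Equiv.subtypeSubtypeEquivSubtypeInter
          (fun w : Fin k → Fin q => Injective w)
          (fun w => ¬ x ∈ Finset.image w Finset.univ)).trans
        (Equiv.subtypeEquiv (Equiv.refl _) (fun w => by simp [not_exists]))
      rw [Nat.card_congr e, card_inj_avoid]
      simp
    rw [hc1, hc2]
    ring
  · -- fibre over boundary colourings containing `x`
    rintro ⟨w, hw⟩ hmem
    rw [Nat.card_pi]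
    refine Finset.prod_congr rfl (fun i _ => ?_)
    have hY : (Finset.image w Finset.univ).card = k := by
      rw [Finset.card_image_of_injective _ hw, Finset.card_univ, Fintype.card_fin]
    exact (count_path hY (iff_of_true hmem rfl) (S i) (hS i)).1
  · -- fibre over boundary colourings avoiding `x`
    rintro ⟨w, hw⟩ hmem
    rw [Nat.card_pi]
    refine Finset.prod_congr rfl (fun i _ => ?_)
    have hY : (Finset.image w Finset.univ).card = k := by
      rw [Finset.card_image_of_injective _ hw, Finset.card_univ, Fintype.card_fin]
    exact (count_path hY (by simp [hmem]) (S i) (hS i)).1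

end Theta

/-! #### Scaling identities for falling factorials -/

section Scaling

/-- the non-multiples of `p` below `p * a` -/
def Tset (p a : ℕ) : Finset ℕ := (Finset.range (p * a)).filter (fun t => ¬ p ∣ t)

lemma sub_one_df (z m : ℕ) :
    (z - 1).descFactorial m = ∏ t ∈ Finset.Ico 1 (m + 1), (z - t) := by
  rw [Finset.prod_Ico_eq_prod_range, Nat.descFactorial_eq_prod_range]
  simp only [Nat.add_sub_cancel]
  refine Finset.prod_congr rfl (fun i _ => ?_)
  omega

lemma mul_mem_helper {p : ℕ} (hp : 0 < p) (s a : ℕ) : p * s < p * a ↔ s < a :=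
  Nat.mul_lt_mul_left hp

lemma filter_dvd_range {p : ℕ} (hp : 0 < p) (a : ℕ) :
    (Finset.range (p * a)).filter (fun t => p ∣ t) = (Finset.range a).image (p * ·) := by
  ext t
  simp only [Finset.mem_filter, Finset.mem_range, Finset.mem_image]
  constructor
  · rintro ⟨hlt, s, rfl⟩
    exact ⟨s, (mul_mem_helper hp s a).mp hlt, rfl⟩
  · rintro ⟨s, hs, rfl⟩
    exact ⟨(mul_mem_helper hp s a).mpr hs, s, rfl⟩

lemma filter_dvd_Ico {p : ℕ} (hp : 0 < p) (a : ℕ) :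
    (Finset.Ico 1 (p * a + 1)).filter (fun t => p ∣ t) =
      (Finset.Ico 1 (a + 1)).image (p * ·) := by
  ext t
  simp only [Finset.mem_filter, Finset.mem_Ico, Finset.mem_image]
  constructor
  · rintro ⟨⟨h1, h2⟩, s, rfl⟩
    have hs1 : 1 ≤ s := by
      rcases Nat.eq_zero_or_pos s with rfl | h
      · omega
      · exact h
    have hs2 : s < a + 1 := by
      have hps : p * s < p * (a + 1) := by rw [Nat.mul_succ]; omega
      exact (mul_mem_helper hp s (a + 1)).mp hps
    exact ⟨s, ⟨hs1, hs2⟩, rfl⟩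
  · rintro ⟨s, ⟨hs1, hs2⟩, rfl⟩
    have hle : p * s ≤ p * a := Nat.mul_le_mul_left p (by omega)
    have h1 : 1 ≤ p * s := Nat.mul_pos hp hs1
    refine ⟨⟨h1, by omega⟩, s, rfl⟩

lemma filter_dvd_Ico' {p : ℕ} (hp : 0 < p) (a : ℕ) :
    (Finset.Ico 1 (p * a)).filter (fun t => p ∣ t) =
      (Finset.Ico 1 a).image (p * ·) := by
  ext t
  simp only [Finset.mem_filter, Finset.mem_Ico, Finset.mem_image]
  constructor
  · rintro ⟨⟨h1, h2⟩, s, rfl⟩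
    have hs1 : 1 ≤ s := by
      rcases Nat.eq_zero_or_pos s with rfl | h
      · omega
      · exact h
    exact ⟨s, ⟨hs1, (mul_mem_helper hp s a).mp h2⟩, rfl⟩
  · rintro ⟨s, ⟨hs1, hs2⟩, rfl⟩
    exact ⟨⟨Nat.mul_pos hp hs1, (mul_mem_helper hp s a).mpr hs2⟩, s, rfl⟩

lemma filter_not_dvd_Ico {p : ℕ} (hp : 0 < p) (a : ℕ) :
    (Finset.Ico 1 (p * a + 1)).filter (fun t => ¬ p ∣ t) = Tset p a := by
  ext t
  simp only [Tset, Finset.mem_filter, Finset.mem_Ico, Finset.mem_range]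
  constructor
  · rintro ⟨⟨h1, h2⟩, hnd⟩
    have hne : t ≠ p * a := by
      rintro rfl
      exact hnd (Dvd.intro a rfl)
    exact ⟨by omega, hnd⟩
  · rintro ⟨hlt, hnd⟩
    have h1 : 1 ≤ t := by
      rcases Nat.eq_zero_or_pos t with rfl | h
      · exact absurd (dvd_zero p) hnd
      · exact h
    exact ⟨⟨h1, by omega⟩, hnd⟩

lemma filter_not_dvd_Ico' {p : ℕ} (hp : 0 < p) (a : ℕ) :
    (Finset.Ico 1 (p * a)).filter (fun t => ¬ p ∣ t) = Tset p a := by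
  ext t
  simp only [Tset, Finset.mem_filter, Finset.mem_Ico, Finset.mem_range]
  constructor
  · rintro ⟨⟨h1, h2⟩, hnd⟩
    exact ⟨h2, hnd⟩
  · rintro ⟨hlt, hnd⟩
    have h1 : 1 ≤ t := by
      rcases Nat.eq_zero_or_pos t with rfl | h
      · exact absurd (dvd_zero p) hnd
      · exact h
    exact ⟨⟨h1, hlt⟩, hnd⟩

lemma prod_image_mul {p : ℕ} (hp : 0 < p) (s : Finset ℕ) (z : ℕ) :
    ∏ t ∈ s.image (p * ·), (p * z - t) = p ^ s.card * ∏ u ∈ s, (z - u) := by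
  rw [Finset.prod_image (fun u _ u' _ h => Nat.eq_of_mul_eq_mul_left hp h)]
  rw [Finset.prod_congr rfl (fun u _ => (Nat.mul_sub p z u).symm),
    Finset.prod_mul_distrib, Finset.prod_const]

lemma V1 {p : ℕ} (hp : 0 < p) (z a : ℕ) :
    (p * z).descFactorial (p * a) =
      p ^ a * z.descFactorial a * ∏ t ∈ Tset p a, (p * z - t) := by
  rw [Nat.descFactorial_eq_prod_range,
    ← Finset.prod_filter_mul_prod_filter_not (Finset.range (p * a)) (fun t => p ∣ t),
    filter_dvd_range hp a, prod_image_mul hp, Finset.card_range,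
    ← Nat.descFactorial_eq_prod_range]
  rfl

lemma V2 {p : ℕ} (hp : 0 < p) (z a : ℕ) :
    (p * z - 1).descFactorial (p * a) =
      p ^ a * (z - 1).descFactorial a * ∏ t ∈ Tset p a, (p * z - t) := by
  rw [sub_one_df,
    ← Finset.prod_filter_mul_prod_filter_not (Finset.Ico 1 (p * a + 1)) (fun t => p ∣ t),
    filter_dvd_Ico hp a, prod_image_mul hp, filter_not_dvd_Ico hp a, Nat.card_Ico,
    Nat.add_sub_cancel, ← sub_one_df]

lemma V3 {p : ℕ} (hp : 0 < p) (z a : ℕ) (ha : 0 < a) :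
    p * ((p * z - 1).descFactorial (p * a - 1)) =
      p ^ a * (z - 1).descFactorial (a - 1) * ∏ t ∈ Tset p a, (p * z - t) := by
  have hpa : p * a - 1 + 1 = p * a := Nat.succ_pred_eq_of_pos (Nat.mul_pos hp ha)
  have haa : a - 1 + 1 = a := Nat.succ_pred_eq_of_pos ha
  rw [sub_one_df, hpa,
    ← Finset.prod_filter_mul_prod_filter_not (Finset.Ico 1 (p * a)) (fun t => p ∣ t),
    filter_dvd_Ico' hp a, prod_image_mul hp, filter_not_dvd_Ico' hp a, Nat.card_Ico]
  have hIco : (Finset.Ico 1 a) = Finset.Ico 1 ((a - 1) + 1) := by rw [haa]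
  rw [hIco, ← sub_one_df]
  have hpow : p * p ^ (a - 1) = p ^ a := by
    conv_rhs => rw [← haa]
    rw [pow_succ]
    ring
  rw [← hpow]
  ring

/-! #### Scaling the path counts -/

def scaleF (p q k : ℕ) : List ℕ → ℕ
  | [] => 1
  | a :: rest => p ^ a * (∏ t ∈ Tset p a, (p * (q - nsz k rest) - t)) * scaleF p q k rest

lemma nsz_map (p k : ℕ) (L : List ℕ) : nsz (p * k) (L.map (p * ·)) = p * nsz k L := by
  cases L <;> rfl

lemma pgh_scale (p q k : ℕ) (hp : 0 < p) (b : Bool) :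
    ∀ L : List ℕ, (∀ a ∈ L, 0 < a) →
      pgh (p * q) (p * k) b (L.map (p * ·)) =
        (scaleF p q k L * (pgh q k b L).1, scaleF p q k L * (pgh q k b L).2) := by
  intro L
  induction L with
  | nil => intro _; cases b <;> simp [pgh, scaleF]
  | cons a rest ih =>
    intro hpos
    have ha : 0 < a := hpos a (by simp)
    have hrec := ih (fun a' ha' => hpos a' (by simp [ha']))
    show pgh (p * q) (p * k) b ((p * a) :: rest.map (p * ·)) = _
    have hms : p * q - p * nsz k rest = p * (q - nsz k rest) := (Nat.mul_sub p q _).symm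
    have h1 := V1 hp (q - nsz k rest) a
    have h2 := V2 hp (q - nsz k rest) a
    have h3 := V3 hp (q - nsz k rest) a ha
    simp only [pgh, nsz_map, hrec, hms, scaleF]
    refine Prod.ext ?_ ?_
    · show (p * (q - nsz k rest) - 1).descFactorial (p * a) *
          (scaleF p q k rest * (pgh q k b rest).1)
        + (p * (q - nsz k rest)).descFactorial (p * a) *
          (scaleF p q k rest * (pgh q k b rest).2) = _
      rw [h1, h2]
      show _ = p ^ a * (∏ t ∈ Tset p a, (p * (q - nsz k rest) - t)) * scaleF p q k rest *
        ((q - nsz k rest - 1).descFactorial a * (pgh q k b rest).1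
          + (q - nsz k rest).descFactorial a * (pgh q k b rest).2)
      ring
    · show p * a * ((p * (q - nsz k rest) - 1).descFactorial (p * a - 1)) *
          (scaleF p q k rest * (pgh q k b rest).1) = _
      calc p * a * ((p * (q - nsz k rest) - 1).descFactorial (p * a - 1)) *
            (scaleF p q k rest * (pgh q k b rest).1)
          = a * (p * ((p * (q - nsz k rest) - 1).descFactorial (p * a - 1))) *
            (scaleF p q k rest * (pgh q k b rest).1) := by ring
        _ = a * (p ^ a * (q - nsz k rest - 1).descFactorial (a - 1) *
              ∏ t ∈ Tset p a, (p * (q - nsz k rest) - t)) *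
            (scaleF p q k rest * (pgh q k b rest).1) := by rw [h3]
        _ = p ^ a * (∏ t ∈ Tset p a, (p * (q - nsz k rest) - t)) * scaleF p q k rest *
            (a * (q - nsz k rest - 1).descFactorial (a - 1) * (pgh q k b rest).1) := by
            ring

/-! #### Scaling the theta count -/

variable {n : ℕ}

def Rn (p q k : ℕ) (S : Fin n → List ℕ) : ℕ :=
  p ^ (k + 1) * (∏ t ∈ Tset p k, (p * q - t)) * ∏ i, scaleF p q k (S i)

theorem theta_scale (S : Fin n → List ℕ) (p q k : ℕ) (hp : 0 < p) (hk : 0 < k)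
    (hpos : ∀ i, ∀ a ∈ S i, 0 < a) :
    thetaCount (fun i => (S i).map (p * ·)) (p * k) (p * q) = Rn p q k S * thetaCount S k q := by
  have h2 := V2 hp q k
  have h3 := V3 hp q k hk
  have hgf : ∀ i, (pgh (p * q) (p * k) false ((S i).map (p * ·))).1
      = scaleF p q k (S i) * (pgh q k false (S i)).1 := fun i => by
    rw [pgh_scale p q k hp false (S i) (hpos i)]
  have hgt : ∀ i, (pgh (p * q) (p * k) true ((S i).map (p * ·))).1
      = scaleF p q k (S i) * (pgh q k true (S i)).1 := fun i => by
    rw [pgh_scale p q k hp true (S i) (hpos i)]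
  unfold thetaCount Rn
  rw [Finset.prod_congr rfl (fun i _ => hgf i), Finset.prod_congr rfl (fun i _ => hgt i),
    Finset.prod_mul_distrib, Finset.prod_mul_distrib, h2]
  have h3' : p * k * ((p * q - 1).descFactorial (p * k - 1))
      = k * (p ^ k * (q - 1).descFactorial (k - 1) * ∏ t ∈ Tset p k, (p * q - t)) := by
    calc p * k * ((p * q - 1).descFactorial (p * k - 1))
        = k * (p * ((p * q - 1).descFactorial (p * k - 1))) := by ring
      _ = k * (p ^ k * (q - 1).descFactorial (k - 1) * ∏ t ∈ Tset p k, (p * q - t)) := by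
          rw [h3]
  rw [h3']
  ring

end Scaling

/-! #### Polynomial versions of the scaling factors -/

section Poly
open Polynomial

noncomputable def sFpoly (p k : ℕ) : List ℕ → Polynomial ℤ
  | [] => 1
  | a :: rest => Polynomial.C ((p : ℤ) ^ a) *
      (∏ t ∈ Tset p a,
        (Polynomial.C (p : ℤ) * Polynomial.X - Polynomial.C ((p * nsz k rest + t : ℕ) : ℤ))) *
      sFpoly p k rest

lemma nsz_le (k : ℕ) (L : List ℕ) : nsz k L ≤ k + L.sum := by
  cases L with
  | nil => simp [nsz]
  | cons a rest => simp [nsz, List.sum_cons]; omega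

lemma sFpoly_eval (p k : ℕ) (hp : 0 < p) :
    ∀ (L : List ℕ) (q : ℕ), k + L.sum ≤ q →
      (sFpoly p k L).eval (q : ℤ) = (scaleF p q k L : ℤ) := by
  intro L
  induction L with
  | nil => intro q hq; simp [sFpoly, scaleF]
  | cons a rest ih =>
    intro q hq
    have hsum : a + rest.sum = (a :: rest).sum := by simp [List.sum_cons]
    have hq' : k + rest.sum ≤ q := by omega
    have hnz : nsz k rest + a ≤ q := by
      have := nsz_le k rest
      omega
    have hfac : ∀ t ∈ Tset p a,
        ((p * (q - nsz k rest) - t : ℕ) : ℤ)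
          = (p : ℤ) * (q : ℤ) - ((p * nsz k rest + t : ℕ) : ℤ) := by
      intro t ht
      have htlt : t < p * a := by
        have := (Finset.mem_filter.mp ht).1
        simpa [Tset] using (Finset.mem_filter.mp ht).1
      have hle : t ≤ p * (q - nsz k rest) := by
        have hle2 : p * a ≤ p * (q - nsz k rest) := Nat.mul_le_mul_left p (by omega)
        omega
      have hnzq : nsz k rest ≤ q := by omega
      push_cast [Nat.cast_sub hle, Nat.cast_sub hnzq]
      ring
    rw [sFpoly]
    rw [Polynomial.eval_mul, Polynomial.eval_mul, Polynomial.eval_C, Polynomial.eval_prod,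
      ih q hq']
    show ((p : ℤ) ^ a) * (∏ t ∈ Tset p a, _) * (scaleF p q k rest : ℤ)
      = ((scaleF p q k (a :: rest) : ℕ) : ℤ)
    have : ∀ t ∈ Tset p a,
        (Polynomial.C (p : ℤ) * Polynomial.X
          - Polynomial.C ((p * nsz k rest + t : ℕ) : ℤ)).eval (q : ℤ)
        = ((p * (q - nsz k rest) - t : ℕ) : ℤ) := by
      intro t ht
      rw [hfac t ht]
      simp
    rw [Finset.prod_congr rfl this]
    show _ = ((p ^ a * (∏ t ∈ Tset p a, (p * (q - nsz k rest) - t)) * scaleF p q k rest : ℕ) : ℤ)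
    push_cast
    ring

variable {n : ℕ}

noncomputable def Rpoly (p k : ℕ) (S : Fin n → List ℕ) : Polynomial ℤ :=
  Polynomial.C ((p : ℤ) ^ (k + 1)) *
    (∏ t ∈ Tset p k, (Polynomial.C (p : ℤ) * Polynomial.X - Polynomial.C (t : ℤ))) *
    ∏ i, sFpoly p k (S i)

lemma Rpoly_eval (p k : ℕ) (hp : 0 < p) (S : Fin n → List ℕ) (q : ℕ)
    (hq : ∀ i, k + (S i).sum ≤ q) (hkq : k ≤ q) :
    (Rpoly p k S).eval (q : ℤ) = (Rn p q k S : ℤ) := by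
  rw [Rpoly, Polynomial.eval_mul, Polynomial.eval_mul, Polynomial.eval_C,
    Polynomial.eval_prod, Polynomial.eval_prod]
  have h1 : ∀ t ∈ Tset p k,
      (Polynomial.C (p : ℤ) * Polynomial.X - Polynomial.C (t : ℤ)).eval (q : ℤ)
        = ((p * q - t : ℕ) : ℤ) := by
    intro t ht
    have htlt : t < p * k := by simpa [Tset] using (Finset.mem_filter.mp ht).1
    have hle : t ≤ p * q := by
      have : p * k ≤ p * q := Nat.mul_le_mul_left p hkq
      omega
    rw [Nat.cast_sub hle]
    push_cast
    simp
  have h2 : ∀ i ∈ Finset.univ, (sFpoly p k (S i)).eval (q : ℤ) = ((scaleF p q k (S i) : ℕ) : ℤ) :=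
    fun i _ => sFpoly_eval p k hp (S i) q (hq i)
  rw [Finset.prod_congr rfl h1, Finset.prod_congr rfl h2, Rn]
  push_cast
  ring

end Poly

end CTAux

/-- If `α` is a non-integer chromatic root of `T(1,S_1,…,S_n,k)`, then
`pα` is a chromatic root of `T(1,pS_1,…,pS_n,pk)`. -/
theorem clique_theta_root_scaling
    (n : ℕ) (hn : 2 ≤ n) (S : Fin n → List ℕ)
    (hS : ∀ i, S i ≠ []) (hpos : ∀ i, ∀ a ∈ S i, 0 < a)
    (k p : ℕ) (hk : 0 < k) (hp : 0 < p)
    (P P' : Polynomial ℤ)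
    (hP : IsChromaticPoly (cliqueThetaGraph 1 S k) P)
    (hP' : IsChromaticPoly (cliqueThetaGraph 1 (fun i => (S i).map (p * ·)) (p * k)) P')
    (α : ℂ) (hα : ∀ z : ℤ, α ≠ (z : ℂ)) (hroot : Polynomial.aeval α P = 0) :
    Polynomial.aeval ((p : ℂ) * α) P' = 0 := by
  classical
  have hS' : ∀ i, (fun i => (S i).map (p * ·)) i ≠ [] := by
    intro i
    simp [hS i]
  -- evaluation of the two chromatic polynomials via the counting formula
  have hPeval : ∀ q : ℕ, P.eval (q : ℤ) = (CTAux.thetaCount S k q : ℤ) := by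
    intro q
    rw [hP q, CTAux.count_theta S k q hS]
  have hP'eval : ∀ q : ℕ,
      P'.eval (((p * q : ℕ) : ℤ)) =
        (CTAux.thetaCount (fun i => (S i).map (p * ·)) (p * k) (p * q) : ℤ) := by
    intro q
    rw [hP' (p * q), CTAux.count_theta _ (p * k) (p * q) hS']
  set Q0 : ℕ := k + (∑ i, (S i).sum) + 1 with hQ0
  have key : ∀ q : ℕ, Q0 ≤ q →
      (P'.comp (Polynomial.C (p : ℤ) * Polynomial.X) - CTAux.Rpoly p k S * P).eval (q : ℤ)
        = 0 := by
    intro q hq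
    have hb : ∀ i, k + (S i).sum ≤ q := by
      intro i
      have hle : (S i).sum ≤ ∑ j, (S j).sum :=
        Finset.single_le_sum (f := fun j => (S j).sum) (fun j _ => Nat.zero_le _)
          (Finset.mem_univ i)
      omega
    have hkq : k ≤ q := by omega
    rw [Polynomial.eval_sub, Polynomial.eval_mul, Polynomial.eval_comp,
      Polynomial.eval_mul, Polynomial.eval_C, Polynomial.eval_X]
    rw [show ((p : ℤ) * (q : ℤ)) = ((p * q : ℕ) : ℤ) by push_cast; ring]
    rw [hP'eval q, hPeval q, CTAux.Rpoly_eval p k hp S q hb hkq,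
      CTAux.theta_scale S p q k hp hk hpos]
    push_cast
    ring
  have hzero : P'.comp (Polynomial.C (p : ℤ) * Polynomial.X) - CTAux.Rpoly p k S * P = 0 := by
    apply Polynomial.eq_zero_of_infinite_isRoot
    apply Set.Infinite.mono
      (s := (fun q : ℕ => (q : ℤ)) '' Set.Ici Q0)
    · rintro _ ⟨q, hq, rfl⟩
      exact key q hq
    · exact (Set.Ici_infinite Q0).image (fun a _ b _ h => by exact_mod_cast h)
  have haeval := congrArg (Polynomial.aeval α) hzero
  rw [map_sub, map_mul, Polynomial.aeval_comp, map_zero, hroot, mul_zero, sub_zero] at haeval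
  have hx : (Polynomial.aeval α) (Polynomial.C (p : ℤ) * Polynomial.X) = (p : ℂ) * α := by
    simp
  rw [hx] at haeval
  exact haeval
end
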